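/- Let (Ω, F₂, P) be a probability space with sub-σ-algebras F₀ = {∅, Ω} ⊂ F₁ ⊂ F₂, and suppose F₂ is atomless conditionally to F₁. Let u_{0,2} : L^∞(F₂) → ℝ be a coherent utility function that is relevant, Lebesgue continuous, comonotone additive (u_{0,2}(ξ + η) = u_{0,2}(ξ) + u_{0,2}(η) whenever ξ, η ∈ L^∞(F₂) are comonotone), and time consistent, i.e. u_{0,2} = u_{0,1} ∘ u_{1,2} where u_{1,2} : L^∞(F₂) → L^∞(F₁) is a Lebesgue continuous conditional coherent utility function and u_{0,1} is the restriction of u_{0,2} to L^∞(F₁). Then there exists a probability measure Q on F₁ with Q ~ P such that u_{0,1}(f) = E_Q[f] for all f ∈ L^∞(F₁). -/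

import Mathlib

open MeasureTheory

/-- `F₂` is atomless conditionally to `F₁`: for every `A ∈ F₂` there is `B ∈ F₂`, `B ⊆ A`,
with `0 < E[1_B | F₁] < E[1_A | F₁]` almost surely on the set `{E[1_A | F₁] > 0}`. -/
def CondAtomless {Ω : Type*} (m1 m2 : MeasurableSpace Ω) (μ : @Measure Ω m2) : Prop :=
  ∀ A : Set Ω, MeasurableSet[m2] A →
    ∃ B : Set Ω, MeasurableSet[m2] B ∧ B ⊆ A ∧
      ∀ᵐ ω ∂μ, 0 < (μ[A.indicator (fun _ => (1 : ℝ)) | m1]) ω →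
        0 < (μ[B.indicator (fun _ => (1 : ℝ)) | m1]) ω ∧
        (μ[B.indicator (fun _ => (1 : ℝ)) | m1]) ω <
          (μ[A.indicator (fun _ => (1 : ℝ)) | m1]) ω

/-- A real-valued function is (uniformly) bounded. -/
def Bdd {Ω : Type*} (ξ : Ω → ℝ) : Prop := ∃ C : ℝ, ∀ ω, |ξ ω| ≤ C

/-- A conditional coherent utility function `u : L^∞(F₂) → L^∞(F₁)`:  it maps bounded
`F₂`-measurable functions to bounded `F₁`-measurable ones, `u(0) = 0`, it is monotone
(`ξ ≥ 0 ⇒ u(ξ) ≥ 0`), concave, positively homogeneous with respect to nonnegative bounded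
`F₁`-measurable weights, and `F₁`-translation invariant. -/
structure CondCoherentUtility {Ω : Type*} (m1 m2 : MeasurableSpace Ω) (μ : @MeasureTheory.Measure Ω m2)
    (u : (Ω → ℝ) → Ω → ℝ) : Prop where
  map_zero : u 0 =ᵐ[μ] 0
  measurable_map : ∀ ξ, Measurable[m2] ξ → Bdd ξ → Measurable[m1] (u ξ) ∧ Bdd (u ξ)
  nonneg : ∀ ξ, Measurable[m2] ξ → Bdd ξ → (∀ ω, 0 ≤ ξ ω) → ∀ᵐ ω ∂μ, 0 ≤ u ξ ω
  concave : ∀ ξ η lam, Measurable[m2] ξ → Bdd ξ → Measurable[m2] η → Bdd η →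
    Measurable[m1] lam → (∀ ω, lam ω ∈ Set.Icc (0 : ℝ) 1) →
    ∀ᵐ ω ∂μ, lam ω * u ξ ω + (1 - lam ω) * u η ω ≤
      u (fun ω' => lam ω' * ξ ω' + (1 - lam ω') * η ω') ω
  poshom : ∀ ξ lam, Measurable[m2] ξ → Bdd ξ → Measurable[m1] lam → Bdd lam →
    (∀ ω, 0 ≤ lam ω) →
    u (fun ω' => lam ω' * ξ ω') =ᵐ[μ] fun ω => lam ω * u ξ ω
  transl : ∀ ξ a, Measurable[m2] ξ → Bdd ξ → Measurable[m1] a → Bdd a →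
    u (ξ + a) =ᵐ[μ] u ξ + a

/-- The Lebesgue property: for any uniformly bounded sequence of `F₂`-measurable functions
converging in probability, the utilities converge in probability. -/
def LebesgueProp {Ω : Type*} {m2 : MeasurableSpace Ω} (μ : MeasureTheory.Measure Ω)
    (u : (Ω → ℝ) → Ω → ℝ) : Prop :=
  ∀ (ξ : ℕ → Ω → ℝ) (η : Ω → ℝ), (∀ n, Measurable[m2] (ξ n)) → Measurable[m2] η →
    (∃ C : ℝ, ∀ n ω, |ξ n ω| ≤ C) → Bdd η →
    MeasureTheory.TendstoInMeasure μ ξ Filter.atTop η →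
    MeasureTheory.TendstoInMeasure μ (fun n => u (ξ n)) Filter.atTop (u η)

/-- The Fatou property: for any uniformly bounded sequence of `F₂`-measurable functions
converging in probability to `η`, `u(η) ≥ limsup u(ξ_n)` a.s. -/
def FatouProp {Ω : Type*} {m2 : MeasurableSpace Ω} (μ : MeasureTheory.Measure Ω)
    (u : (Ω → ℝ) → Ω → ℝ) : Prop :=
  ∀ (ξ : ℕ → Ω → ℝ) (η : Ω → ℝ), (∀ n, Measurable[m2] (ξ n)) → Measurable[m2] η →
    (∃ C : ℝ, ∀ n ω, |ξ n ω| ≤ C) → Bdd η →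
    MeasureTheory.TendstoInMeasure μ ξ Filter.atTop η →
    ∀ᵐ ω ∂μ, Filter.limsup (fun n => u (ξ n) ω) Filter.atTop ≤ u η ω

/-- Two real random variables are comonotone if
`(ξ ω − ξ ω') * (η ω − η ω') ≥ 0` for all `ω, ω'`. -/
def Comonotone' {Ω : Type*} (ξ η : Ω → ℝ) : Prop :=
  ∀ ω ω', 0 ≤ (ξ ω - ξ ω') * (η ω - η ω')

/-- A (scalar) coherent utility function on `L^∞(m2)`: `u(0) = 0`, monotone, concave,
positively homogeneous and translation invariant. -/
structure ScalarCoherentUtility {Ω : Type*} (m2 : MeasurableSpace Ω)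
    (v : (Ω → ℝ) → ℝ) : Prop where
  map_zero : v 0 = 0
  nonneg : ∀ ξ, Measurable[m2] ξ → Bdd ξ → (∀ ω, 0 ≤ ξ ω) → 0 ≤ v ξ
  concave : ∀ ξ η, Measurable[m2] ξ → Bdd ξ → Measurable[m2] η → Bdd η →
    ∀ c : ℝ, c ∈ Set.Icc (0 : ℝ) 1 →
      c * v ξ + (1 - c) * v η ≤ v (fun ω => c * ξ ω + (1 - c) * η ω)
  poshom : ∀ ξ, Measurable[m2] ξ → Bdd ξ → ∀ c : ℝ, 0 ≤ c →
    v (fun ω => c * ξ ω) = c * v ξ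
  transl : ∀ ξ, Measurable[m2] ξ → Bdd ξ → ∀ a : ℝ, v (fun ω => ξ ω + a) = v ξ + a

/-- Lebesgue continuity for a scalar utility: uniformly bounded convergence in probability
implies convergence of the utilities. -/
def ScalarLebesgue {Ω : Type*} {m2 : MeasurableSpace Ω} (μ : MeasureTheory.Measure Ω)
    (v : (Ω → ℝ) → ℝ) : Prop :=
  ∀ (ξ : ℕ → Ω → ℝ) (η : Ω → ℝ), (∀ n, Measurable[m2] (ξ n)) → Measurable[m2] η →
    (∃ C : ℝ, ∀ n ω, |ξ n ω| ≤ C) → Bdd η →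
    MeasureTheory.TendstoInMeasure μ ξ Filter.atTop η →
    Filter.Tendsto (fun n => v (ξ n)) Filter.atTop (nhds (v η))

/-- Relevance: `P[A] > 0` implies `v(−1_A) < 0`. -/
def Relevant {Ω : Type*} {m2 : MeasurableSpace Ω} (μ : MeasureTheory.Measure Ω)
    (v : (Ω → ℝ) → ℝ) : Prop :=
  ∀ A : Set Ω, MeasurableSet[m2] A → 0 < μ A →
    v (fun ω => -(A.indicator (fun _ => (1 : ℝ)) ω)) < 0

/-- Comonotone additivity: `v(ξ + η) = v(ξ) + v(η)` for comonotone `ξ, η`. -/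
def ComonotoneAdditive {Ω : Type*} (m2 : MeasurableSpace Ω) (v : (Ω → ℝ) → ℝ) : Prop :=
  ∀ ξ η : Ω → ℝ, Measurable[m2] ξ → Bdd ξ → Measurable[m2] η → Bdd η → Comonotone' ξ η →
    v (ξ + η) = v ξ + v η


namespace Aux13

open Filter Set

variable {Ω : Type*}

noncomputable def ind (s : Set Ω) : Ω → ℝ := s.indicator fun _ => 1

open Classical in
lemma ind_apply (s : Set Ω) (ω : Ω) : ind s ω = if ω ∈ s then 1 else 0 := by
  classical
  simp [ind, Set.indicator_apply]

lemma ind_mem {s : Set Ω} {ω : Ω} (h : ω ∈ s) : ind s ω = 1 := by simp [ind_apply, h]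

lemma ind_nmem {s : Set Ω} {ω : Ω} (h : ω ∉ s) : ind s ω = 0 := by simp [ind_apply, h]

lemma ind_nonneg (s : Set Ω) (ω : Ω) : 0 ≤ ind s ω := by
  rw [ind_apply]; split <;> norm_num

lemma ind_le_one (s : Set Ω) (ω : Ω) : ind s ω ≤ 1 := by
  rw [ind_apply]; split <;> norm_num

lemma abs_ind_le_one (s : Set Ω) (ω : Ω) : |ind s ω| ≤ 1 := by
  rw [abs_le]; constructor
  · linarith [ind_nonneg s ω]
  · exact ind_le_one s ω

lemma bdd_ind (s : Set Ω) : Bdd (ind s) := ⟨1, abs_ind_le_one s⟩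

lemma bdd_const (c : ℝ) : Bdd (fun _ : Ω => c) := ⟨|c|, fun _ => le_rfl⟩

lemma bdd_zero : Bdd (0 : Ω → ℝ) := ⟨0, fun _ => by simp⟩

lemma bdd_add {f g : Ω → ℝ} (hf : Bdd f) (hg : Bdd g) : Bdd (fun ω => f ω + g ω) := by
  obtain ⟨C, hC⟩ := hf; obtain ⟨D, hD⟩ := hg
  exact ⟨C + D, fun ω => (abs_add_le _ _).trans (add_le_add (hC ω) (hD ω))⟩

lemma bdd_neg {f : Ω → ℝ} (hf : Bdd f) : Bdd (fun ω => -f ω) := by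
  obtain ⟨C, hC⟩ := hf; exact ⟨C, fun ω => by rw [abs_neg]; exact hC ω⟩

lemma bdd_mul {f g : Ω → ℝ} (hf : Bdd f) (hg : Bdd g) : Bdd (fun ω => f ω * g ω) := by
  obtain ⟨C, hC⟩ := hf; obtain ⟨D, hD⟩ := hg
  refine ⟨C * D, fun ω => ?_⟩
  rw [abs_mul]
  exact mul_le_mul (hC ω) (hD ω) (abs_nonneg _) ((abs_nonneg _).trans (hC ω))

lemma bdd_sub {f g : Ω → ℝ} (hf : Bdd f) (hg : Bdd g) : Bdd (fun ω => f ω - g ω) := by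
  have := bdd_add hf (bdd_neg hg)
  simpa [sub_eq_add_neg] using this

lemma measurable_ind {m : MeasurableSpace Ω} {s : Set Ω} (hs : MeasurableSet[m] s) :
    Measurable[m] (ind s) := measurable_const.indicator hs

/-- Functions with disjoint "supports", one nonpositive and one nonnegative, are comonotone. -/
lemma comonotone_of_disjoint {ξ η : Ω → ℝ} (hξ : ∀ ω, ξ ω ≤ 0) (hη : ∀ ω, 0 ≤ η ω)
    (hd : ∀ ω, ξ ω = 0 ∨ η ω = 0) : Comonotone' ξ η := by
  intro ω ω'
  rcases hd ω with h | h <;> rcases hd ω' with h' | h' <;>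
    simp only [h, h'] <;> nlinarith [hξ ω, hξ ω', hη ω, hη ω']


section VU

variable {m1 m2 : MeasurableSpace Ω} {μ : @MeasureTheory.Measure Ω m2}
  {v : (Ω → ℝ) → ℝ} {u12 : (Ω → ℝ) → Ω → ℝ}

lemma v_const (hv : ScalarCoherentUtility m2 v) (c : ℝ) : v (fun _ => c) = c := by
  have h := hv.transl 0 measurable_zero bdd_zero c
  simp only [Pi.zero_apply, zero_add] at h
  rw [h, hv.map_zero, zero_add]

lemma v_superadd (hv : ScalarCoherentUtility m2 v) {ξ η : Ω → ℝ}
    (hξ : Measurable[m2] ξ) (hξb : Bdd ξ) (hη : Measurable[m2] η) (hηb : Bdd η) :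
    v ξ + v η ≤ v (fun ω => ξ ω + η ω) := by
  have hmix : Measurable[m2] (fun ω => (1/2 : ℝ) * ξ ω + (1 - 1/2 : ℝ) * η ω) :=
    (measurable_const.mul hξ).add (measurable_const.mul hη)
  have hmixb : Bdd (fun ω => (1/2 : ℝ) * ξ ω + (1 - 1/2 : ℝ) * η ω) :=
    bdd_add (bdd_mul (bdd_const _) hξb) (bdd_mul (bdd_const _) hηb)
  have h1 := hv.concave ξ η hξ hξb hη hηb (1/2) (by constructor <;> norm_num)
  have h2 := hv.poshom _ hmix hmixb 2 (by norm_num)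
  have h3 : (fun ω => (2:ℝ) * ((1/2 : ℝ) * ξ ω + (1 - 1/2 : ℝ) * η ω)) = fun ω => ξ ω + η ω := by
    funext ω; ring
  rw [h3] at h2
  linarith

lemma v_mono (hv : ScalarCoherentUtility m2 v) {ξ η : Ω → ℝ}
    (hξ : Measurable[m2] ξ) (hξb : Bdd ξ) (hη : Measurable[m2] η) (hηb : Bdd η)
    (hle : ∀ ω, ξ ω ≤ η ω) : v ξ ≤ v η := by
  have hd : Measurable[m2] (fun ω => η ω - ξ ω) := hη.sub hξ
  have hdb : Bdd (fun ω => η ω - ξ ω) := bdd_sub hηb hξb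
  have h0 := hv.nonneg _ hd hdb (fun ω => by linarith [hle ω])
  have h1 := v_superadd hv hξ hξb hd hdb
  have h2 : (fun ω => ξ ω + (η ω - ξ ω)) = η := by funext ω; ring
  rw [h2] at h1; linarith

lemma v_ae (hvLeb : ScalarLebesgue μ v) {ξ η : Ω → ℝ}
    (hξ : Measurable[m2] ξ) (hξb : Bdd ξ) (hη : Measurable[m2] η) (hηb : Bdd η)
    (hae : ξ =ᵐ[μ] η) : v ξ = v η := by
  obtain ⟨C, hC⟩ := hξb
  have htim : MeasureTheory.TendstoInMeasure μ (fun _ : ℕ => ξ) Filter.atTop η := by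
    intro ε hε
    have hne : μ {x | ξ x ≠ η x} = 0 := by
      simpa [Filter.EventuallyEq, ae_iff] using hae
    have h0 : μ {x | ε ≤ edist (ξ x) (η x)} = 0 := by
      refine measure_mono_null ?_ hne
      intro x hx
      simp only [Set.mem_setOf_eq] at hx ⊢
      intro hxe
      rw [hxe, edist_self] at hx
      exact absurd hx (not_le.mpr hε)
    simpa only [h0] using (tendsto_const_nhds : Filter.Tendsto (fun _ : ℕ => (0 : ENNReal)) Filter.atTop (nhds 0))
  have h := hvLeb (fun _ => ξ) η (fun _ => hξ) hη ⟨C, fun _ => hC⟩ hηb htim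
  exact (tendsto_nhds_unique h tendsto_const_nhds).symm

def Lm (m1 : MeasurableSpace Ω) (v : (Ω → ℝ) → ℝ) (f : Ω → ℝ) : Prop :=
  Measurable[m1] f ∧ Bdd f ∧ v f + v (fun ω => -f ω) = 0

lemma v_add_left (hm : m1 ≤ m2) (hv : ScalarCoherentUtility m2 v) {f g : Ω → ℝ}
    (hf : Lm m1 v f) (hg : Measurable[m2] g) (hgb : Bdd g) :
    v (fun ω => f ω + g ω) = v f + v g := by
  obtain ⟨hf1, hf2, hf3⟩ := hf
  have hf2' : Measurable[m2] f := hf1.mono hm le_rfl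
  have h1 := v_superadd hv hf2' hf2 hg hgb
  have hsum : Measurable[m2] (fun ω => f ω + g ω) := hf2'.add hg
  have hsumb : Bdd (fun ω => f ω + g ω) := bdd_add hf2 hgb
  have h2 := v_superadd (ξ := fun ω => f ω + g ω) (η := fun ω => -f ω) hv hsum hsumb hf2'.neg (bdd_neg hf2)
  have h3 : (fun ω => (f ω + g ω) + -f ω) = g := funext fun ω => by ring
  rw [h3] at h2
  linarith

lemma Lm_neg {f : Ω → ℝ} (h : Lm m1 v f) : Lm m1 v (fun ω => -f ω) := by
  refine ⟨h.1.neg, bdd_neg h.2.1, ?_⟩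
  show v (fun ω => -f ω) + v (fun ω => -(-f ω)) = 0
  have h3 := h.2.2
  have he : (fun ω => -(-f ω)) = f := funext fun ω => by ring
  rw [he]
  linarith

lemma Lm_add (hm : m1 ≤ m2) (hv : ScalarCoherentUtility m2 v) {f g : Ω → ℝ}
    (hf : Lm m1 v f) (hg : Lm m1 v g) : Lm m1 v (fun ω => f ω + g ω) := by
  have hg2 : Measurable[m2] g := hg.1.mono hm le_rfl
  refine ⟨hf.1.add hg.1, bdd_add hf.2.1 hg.2.1, ?_⟩
  show v (fun ω => f ω + g ω) + v (fun ω => -(f ω + g ω)) = 0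
  have h1 := v_add_left hm hv hf hg2 hg.2.1
  have h2 := v_add_left (g := fun ω => -g ω) hm hv (Lm_neg hf) hg2.neg (bdd_neg hg.2.1)
  have he : (fun ω => -(f ω + g ω)) = fun ω => -f ω + -g ω := funext fun ω => by ring
  rw [he, h1, h2]
  have := hf.2.2; have := hg.2.2
  linarith

lemma Lm_smul (hm : m1 ≤ m2) (hv : ScalarCoherentUtility m2 v) {f : Ω → ℝ} (c : ℝ)
    (hf : Lm m1 v f) : Lm m1 v (fun ω => c * f ω) := by
  have hf2 : Measurable[m2] f := hf.1.mono hm le_rfl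
  refine ⟨measurable_const.mul hf.1, bdd_mul (bdd_const c) hf.2.1, ?_⟩
  show v (fun ω => c * f ω) + v (fun ω => -(c * f ω)) = 0
  rcases le_or_gt 0 c with hc | hc
  · have h1 := hv.poshom f hf2 hf.2.1 c hc
    have h2 := hv.poshom (fun ω => -f ω) hf2.neg (bdd_neg hf.2.1) c hc
    have he : (fun ω => -(c * f ω)) = fun ω => c * -f ω := funext fun ω => by ring
    rw [he, h1, h2]
    have := hf.2.2
    nlinarith
  · have h1 := hv.poshom (fun ω => -f ω) hf2.neg (bdd_neg hf.2.1) (-c) (by linarith)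
    have h2 := hv.poshom f hf2 hf.2.1 (-c) (by linarith)
    have he1 : (fun ω => c * f ω) = fun ω => (-c) * -f ω := funext fun ω => by ring
    have he2 : (fun ω => -(c * f ω)) = fun ω => (-c) * f ω := funext fun ω => by ring
    rw [he1, he2, h1, h2]
    have := hf.2.2
    nlinarith

lemma Lm_of_tendsto [MeasureTheory.IsFiniteMeasure μ] (hm : m1 ≤ m2)
    (hv : ScalarCoherentUtility m2 v) (hvLeb : ScalarLebesgue μ v)
    {f : ℕ → Ω → ℝ} {g : Ω → ℝ} (hf : ∀ n, Lm m1 v (f n)) {C : ℝ}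
    (hbd : ∀ n ω, |f n ω| ≤ C) (hg1 : Measurable[m1] g) (hgb : Bdd g)
    (hten : ∀ ω, Filter.Tendsto (fun n => f n ω) Filter.atTop (nhds (g ω))) :
    Lm m1 v g := by
  have hfm2 : ∀ n, Measurable[m2] (f n) := fun n => (hf n).1.mono hm le_rfl
  have hg2 : Measurable[m2] g := hg1.mono hm le_rfl
  have htim : MeasureTheory.TendstoInMeasure μ f Filter.atTop g :=
    MeasureTheory.tendstoInMeasure_of_tendsto_ae
      (fun n => (hfm2 n).aestronglyMeasurable) (Filter.Eventually.of_forall hten)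
  have htimn : MeasureTheory.TendstoInMeasure μ (fun n ω => -f n ω) Filter.atTop
      (fun ω => -g ω) :=
    MeasureTheory.tendstoInMeasure_of_tendsto_ae
      (fun n => (hfm2 n).neg.aestronglyMeasurable)
      (Filter.Eventually.of_forall fun ω => (hten ω).neg)
  have h1 := hvLeb f g hfm2 hg2 ⟨C, hbd⟩ hgb htim
  have h2 := hvLeb (fun n ω => -f n ω) (fun ω => -g ω) (fun n => (hfm2 n).neg) hg2.neg
    ⟨C, fun n ω => by rw [abs_neg]; exact hbd n ω⟩ (bdd_neg hgb) htimn
  have h3 : Filter.Tendsto (fun n => v (f n) + v (fun ω => -f n ω)) Filter.atTop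
      (nhds (v g + v (fun ω => -g ω))) := h1.add h2
  have h4 : (fun n => v (f n) + v (fun ω => -f n ω)) = fun _ => (0 : ℝ) :=
    funext fun n => (hf n).2.2
  rw [h4] at h3
  exact ⟨hg1, hgb, tendsto_nhds_unique h3 tendsto_const_nhds⟩

lemma u12_superadd (hu12 : CondCoherentUtility m1 m2 μ u12) {ξ η : Ω → ℝ}
    (hξ : Measurable[m2] ξ) (hξb : Bdd ξ) (hη : Measurable[m2] η) (hηb : Bdd η) :
    ∀ᵐ ω ∂μ, u12 ξ ω + u12 η ω ≤ u12 (fun ω' => ξ ω' + η ω') ω := by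
  have hc := hu12.concave ξ η (fun _ => (1/2 : ℝ)) hξ hξb hη hηb measurable_const
    (fun ω => by constructor <;> norm_num)
  have hp := hu12.poshom (fun ω' => ξ ω' + η ω') (fun _ => (1/2 : ℝ)) (hξ.add hη)
    (bdd_add hξb hηb) measurable_const (bdd_const _) (fun _ => by norm_num)
  have he : (fun ω' => (1/2 : ℝ) * ξ ω' + (1 - 1/2 : ℝ) * η ω') =
      fun ω' => (1/2 : ℝ) * (ξ ω' + η ω') := funext fun ω => by ring
  rw [he] at hc
  filter_upwards [hc, hp] with ω h1 h2
  rw [h2] at h1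
  linarith

lemma u12_mono (hu12 : CondCoherentUtility m1 m2 μ u12) {ξ η : Ω → ℝ}
    (hξ : Measurable[m2] ξ) (hξb : Bdd ξ) (hη : Measurable[m2] η) (hηb : Bdd η)
    (hle : ∀ ω, ξ ω ≤ η ω) : ∀ᵐ ω ∂μ, u12 ξ ω ≤ u12 η ω := by
  have hsa := u12_superadd (η := fun ω => η ω - ξ ω) hu12 hξ hξb (hη.sub hξ) (bdd_sub hηb hξb)
  have h0 := hu12.nonneg (fun ω => η ω - ξ ω) (hη.sub hξ) (bdd_sub hηb hξb)
    (fun ω => by show (0:ℝ) ≤ η ω - ξ ω; linarith [hle ω])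
  have he : (fun ω' => ξ ω' + (η ω' - ξ ω')) = η := funext fun ω => by ring
  rw [he] at hsa
  filter_upwards [hsa, h0] with ω h1 h2
  linarith

lemma u12_of_m1 (hu12 : CondCoherentUtility m1 m2 μ u12) {f : Ω → ℝ}
    (hf : Measurable[m1] f) (hfb : Bdd f) : u12 f =ᵐ[μ] f := by
  have ht := hu12.transl 0 f measurable_zero bdd_zero hf hfb
  rw [zero_add] at ht
  filter_upwards [ht, hu12.map_zero] with ω h1 h2
  simp only [Pi.add_apply, Pi.zero_apply] at h1 h2
  rw [h1, h2, zero_add]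

lemma good_of_strict [MeasureTheory.IsProbabilityMeasure μ] (hm : m1 ≤ m2)
    (hv : ScalarCoherentUtility m2 v) (hvLeb : ScalarLebesgue μ v)
    (hcomon : ComonotoneAdditive m2 v)
    (hu12 : CondCoherentUtility m1 m2 μ u12)
    (hTC : ∀ ξ, Measurable[m2] ξ → Bdd ξ → v ξ = v (u12 ξ))
    {C B : Set Ω} (hC : MeasurableSet[m1] C) (hB : MeasurableSet[m2] B) (hBC : B ⊆ C)
    (hγC : ∀ᵐ ω ∂μ, ω ∈ C →
      (-1 < u12 (fun ω' => -ind B ω') ω ∧ u12 (fun ω' => -ind B ω') ω < 0))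
    (hγnC : ∀ᵐ ω ∂μ, ω ∉ C → u12 (fun ω' => -ind B ω') ω = 0) :
    ∀ C', MeasurableSet[m1] C' → Lm m1 v (ind (C ∩ C')) := by
  classical
  have hmB : Measurable[m2] (fun ω' => -ind B ω') := (measurable_ind hB).neg
  have hbB : Bdd (fun ω' => -ind B ω') := bdd_neg (bdd_ind B)
  obtain ⟨hγ0m, hγ0b⟩ := hu12.measurable_map _ hmB hbB
  set γ0 : Ω → ℝ := u12 (fun ω' => -ind B ω') with hγ0def
  set γ : Ω → ℝ := C.piecewise (fun ω => min 0 (max (-1) (γ0 ω))) 0 with hγdef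
  have hγm : Measurable[m1] γ :=
    Measurable.piecewise hC (measurable_const.min (measurable_const.max hγ0m))
      measurable_const
  have hγ_nonpos : ∀ ω, γ ω ≤ 0 := by
    intro ω; by_cases h : ω ∈ C <;> simp [hγdef, Set.piecewise, h]
  have hγ_ge : ∀ ω, -1 ≤ γ ω := by
    intro ω; by_cases h : ω ∈ C
    · simp only [hγdef, Set.piecewise, if_pos h, le_min_iff]
      exact ⟨by norm_num, le_max_left _ _⟩
    · simp [hγdef, Set.piecewise, h]
  have hγ_zero : ∀ ω, ω ∉ C → γ ω = 0 := by
    intro ω h; simp [hγdef, Set.piecewise, h]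
  have hγb : Bdd γ := ⟨1, fun ω => abs_le.mpr ⟨by linarith [hγ_ge ω], by linarith [hγ_nonpos ω]⟩⟩
  have hγae : γ =ᵐ[μ] γ0 := by
    filter_upwards [hγC, hγnC] with ω h1 h2
    by_cases h : ω ∈ C
    · obtain ⟨ha, hb⟩ := h1 h
      simp only [hγdef, Set.piecewise, if_pos h]
      rw [max_eq_right ha.le, min_eq_right hb.le]
    · simp only [hγdef, Set.piecewise, if_neg h]
      exact (h2 h).symm
  have hγstrict : ∀ᵐ ω ∂μ, ω ∈ C → (-1 < γ ω ∧ γ ω < 0) := by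
    filter_upwards [hγC, hγae] with ω h1 h2
    intro h
    rw [h2]
    exact h1 h
  -- Stage 1
  have key1 : ∀ lam : Ω → ℝ, Measurable[m1] lam → (∀ ω, 0 ≤ lam ω) →
      ∀ M : ℝ, (∀ ω, lam ω ≤ M) →
      v (fun ω => lam ω * γ ω) + v (fun ω => -(lam ω * γ ω)) = 0 := by
    intro lam hlamm hlam0 M hlamM
    have hlamb : Bdd lam := ⟨max M 0, fun ω => abs_le.mpr
      ⟨by have := hlam0 ω; have := le_max_right M 0; linarith,
       le_trans (hlamM ω) (le_max_left M 0)⟩⟩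
    set sq : ℕ → Ω → ℝ := fun n ω => min (lam ω * -γ ω / (1 + γ ω)) n with hsdef
    have hsm : ∀ n, Measurable[m1] (sq n) := fun n =>
      ((hlamm.mul hγm.neg).div (measurable_const.add hγm)).min measurable_const
    have hs0 : ∀ n ω, 0 ≤ sq n ω := fun n ω => le_min
      (div_nonneg (mul_nonneg (hlam0 ω) (neg_nonneg.mpr (hγ_nonpos ω)))
        (by linarith [hγ_ge ω]))
      (Nat.cast_nonneg n)
    have hsb : ∀ n, Bdd (sq n) := fun n => ⟨n, fun ω => abs_le.mpr
      ⟨le_trans (by norm_num [Nat.cast_nonneg]) (hs0 n ω), min_le_right _ _⟩⟩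
    have hsden : ∀ n ω, sq n ω * (1 + γ ω) ≤ lam ω * -γ ω := by
      intro n ω
      rcases eq_or_lt_of_le (show (0:ℝ) ≤ 1 + γ ω by linarith [hγ_ge ω]) with h | h
      · rw [← h, mul_zero]
        exact mul_nonneg (hlam0 ω) (by linarith [hγ_nonpos ω])
      · calc sq n ω * (1 + γ ω) ≤ lam ω * -γ ω / (1 + γ ω) * (1 + γ ω) :=
            mul_le_mul_of_nonneg_right (min_le_left _ _) h.le
          _ = lam ω * -γ ω := div_mul_cancel₀ _ (ne_of_gt h)
    have hBn_bound : ∀ n ω, 0 ≤ sq n ω * (γ ω + ind C ω) ∧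
        sq n ω * (γ ω + ind C ω) ≤ lam ω * -γ ω := by
      intro n ω
      by_cases h : ω ∈ C
      · rw [ind_mem h]
        refine ⟨mul_nonneg (hs0 n ω) (by linarith [hγ_ge ω]), ?_⟩
        have h' : sq n ω * (γ ω + 1) = sq n ω * (1 + γ ω) := by ring
        rw [h']
        exact hsden n ω
      · rw [hγ_zero ω h, ind_nmem h]
        norm_num
    -- the comonotone identity for each n
    have hiden : ∀ n : ℕ,
        v (fun ω => lam ω * γ ω + sq n ω * (γ ω + ind C ω)) =
          v (fun ω => lam ω * γ ω) + v (fun ω => sq n ω * (γ ω + ind C ω)) := by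
      intro n
      have hCm2 : MeasurableSet[m2] C := hm _ hC
      have hξm : Measurable[m2] (fun ω => lam ω * -ind B ω) :=
        (hlamm.mono hm le_rfl).mul (measurable_ind hB).neg
      have hξb : Bdd (fun ω => lam ω * -ind B ω) := bdd_mul hlamb (bdd_neg (bdd_ind B))
      have hηm : Measurable[m2] (fun ω => sq n ω * (ind C ω + -ind B ω)) :=
        ((hsm n).mono hm le_rfl).mul ((measurable_ind hCm2).add (measurable_ind hB).neg)
      have hηb : Bdd (fun ω => sq n ω * (ind C ω + -ind B ω)) :=
        bdd_mul (hsb n) (bdd_add (bdd_ind C) (bdd_neg (bdd_ind B)))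
      have hξ0 : ∀ ω, lam ω * -ind B ω ≤ 0 := fun ω => by
        have := mul_nonneg (hlam0 ω) (ind_nonneg B ω); nlinarith
      have hη0 : ∀ ω, 0 ≤ sq n ω * (ind C ω + -ind B ω) := fun ω => by
        refine mul_nonneg (hs0 n ω) ?_
        by_cases h : ω ∈ B
        · rw [ind_mem h, ind_mem (hBC h)]; norm_num
        · rw [ind_nmem h]; have := ind_nonneg C ω; linarith
      have hdisj : ∀ ω, lam ω * -ind B ω = 0 ∨ sq n ω * (ind C ω + -ind B ω) = 0 := by
        intro ω
        by_cases h : ω ∈ B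
        · right; rw [ind_mem h, ind_mem (hBC h)]; ring
        · left; rw [ind_nmem h]; ring
      have h1 := hcomon _ _ hξm hξb hηm hηb (comonotone_of_disjoint hξ0 hη0 hdisj)
      -- (a) : v ξ
      have hpa := hu12.poshom (fun ω' => -ind B ω') lam hmB hbB hlamm hlamb hlam0
      have hva : v (fun ω => lam ω * -ind B ω) = v (fun ω => lam ω * γ ω) := by
        rw [hTC _ hξm hξb]
        obtain ⟨huma, huba⟩ := hu12.measurable_map _ hξm hξb
        refine v_ae hvLeb (huma.mono hm le_rfl) huba
          ((hlamm.mul hγm).mono hm le_rfl) (bdd_mul hlamb hγb) ?_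
        filter_upwards [hpa, hγae] with ω ha hb
        rw [hb, hγ0def]
        exact ha
      -- (b) : v η
      have hζm : Measurable[m2] ((fun ω' => -ind B ω') + ind C) :=
        (measurable_ind hB).neg.add (measurable_ind hCm2)
      have hζb : Bdd ((fun ω' => -ind B ω') + ind C) :=
        bdd_add (bdd_neg (bdd_ind B)) (bdd_ind C)
      have htb := hu12.transl (fun ω' => -ind B ω') (ind C) hmB hbB (measurable_ind hC)
        (bdd_ind C)
      have hpb := hu12.poshom ((fun ω' => -ind B ω') + ind C) (sq n) hζm hζb (hsm n)
        (hsb n) (hs0 n)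
      simp only [Pi.add_apply] at hpb htb
      have hvb : v (fun ω => sq n ω * (ind C ω + -ind B ω)) =
          v (fun ω => sq n ω * (γ ω + ind C ω)) := by
        rw [hTC _ hηm hηb]
        obtain ⟨humb, hubb⟩ := hu12.measurable_map _ hηm hηb
        refine v_ae hvLeb (humb.mono hm le_rfl) hubb
          (((hsm n).mul (hγm.add (measurable_ind hC))).mono hm le_rfl)
          (bdd_mul (hsb n) (bdd_add hγb (bdd_ind C))) ?_
        have hcg : u12 (fun ω => sq n ω * (ind C ω + -ind B ω)) =
            u12 (fun ω' => sq n ω' * (-ind B ω' + ind C ω')) :=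
          congrArg u12 (by funext ω; ring)
        rw [hcg]
        filter_upwards [hpb, htb, hγae] with ω ha hb hc
        rw [ha, hb, hc, hγ0def]
        simp only [Pi.add_apply]
      -- (c) : v (ξ + η)
      have hξ2m : Measurable[m2] (fun ω => (lam ω + sq n ω) * -ind B ω) :=
        ((hlamm.add (hsm n)).mono hm le_rfl).mul (measurable_ind hB).neg
      have hξ2b : Bdd (fun ω => (lam ω + sq n ω) * -ind B ω) :=
        bdd_mul (bdd_add hlamb (hsb n)) (bdd_neg (bdd_ind B))
      have hpc := hu12.poshom (fun ω' => -ind B ω') (fun ω => lam ω + sq n ω) hmB hbB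
        (hlamm.add (hsm n)) (bdd_add hlamb (hsb n))
        (fun ω => add_nonneg (hlam0 ω) (hs0 n ω))
      have htc := hu12.transl (fun ω => (lam ω + sq n ω) * -ind B ω)
        (fun ω => sq n ω * ind C ω) hξ2m hξ2b ((hsm n).mul (measurable_ind hC))
        (bdd_mul (hsb n) (bdd_ind C))
      have hsum_m : Measurable[m2]
          ((fun ω => (lam ω + sq n ω) * -ind B ω) + fun ω => sq n ω * ind C ω) :=
        hξ2m.add (((hsm n).mul (measurable_ind hC)).mono hm le_rfl)
      have hsum_b : Bdd ((fun ω => (lam ω + sq n ω) * -ind B ω) + fun ω => sq n ω * ind C ω) :=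
        bdd_add hξ2b (bdd_mul (hsb n) (bdd_ind C))
      have heq : ((fun ω => lam ω * -ind B ω) + fun ω => sq n ω * (ind C ω + -ind B ω)) =
          ((fun ω => (lam ω + sq n ω) * -ind B ω) + fun ω => sq n ω * ind C ω) := by
        funext ω; simp only [Pi.add_apply]; ring
      have hvc : v ((fun ω => lam ω * -ind B ω) + fun ω => sq n ω * (ind C ω + -ind B ω)) =
          v (fun ω => lam ω * γ ω + sq n ω * (γ ω + ind C ω)) := by
        rw [heq, hTC _ hsum_m hsum_b]
        obtain ⟨humc, hubc⟩ := hu12.measurable_map _ hsum_m hsum_b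
        refine v_ae hvLeb (humc.mono hm le_rfl) hubc
          ((((hlamm.mul hγm).add ((hsm n).mul (hγm.add (measurable_ind hC)))).mono hm le_rfl))
          (bdd_add (bdd_mul hlamb hγb) (bdd_mul (hsb n) (bdd_add hγb (bdd_ind C)))) ?_
        filter_upwards [hpc, htc, hγae] with ω ha hb hc
        rw [hb]
        simp only [Pi.add_apply]
        rw [ha, hc, hγ0def]
        ring
      rw [hvc, hva, hvb] at h1
      exact h1
    -- limits
    have hγle1 : ∀ ω, -γ ω ≤ 1 := fun ω => by linarith [hγ_ge ω]
    have hlamabs : ∀ ω, |lam ω| ≤ max M 0 := fun ω => abs_le.mpr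
      ⟨by have := hlam0 ω; have := le_max_right M 0; linarith,
       le_trans (hlamM ω) (le_max_left M 0)⟩
    have hγabs : ∀ ω, |γ ω| ≤ 1 := fun ω => abs_le.mpr
      ⟨hγ_ge ω, by linarith [hγ_nonpos ω]⟩
    have hlamγ : ∀ ω, |lam ω * γ ω| ≤ max M 0 := by
      intro ω
      calc |lam ω * γ ω| = |lam ω| * |γ ω| := abs_mul _ _
        _ ≤ max M 0 * 1 := mul_le_mul (hlamabs ω) (hγabs ω) (abs_nonneg _) (le_max_right M 0)
        _ = max M 0 := mul_one _
    have hBabs : ∀ n ω, |sq n ω * (γ ω + ind C ω)| ≤ max M 0 := by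
      intro n ω
      obtain ⟨h0', h1'⟩ := hBn_bound n ω
      rw [abs_of_nonneg h0']
      refine le_trans h1' (le_trans ?_ (le_max_left M 0))
      calc lam ω * -γ ω ≤ M * 1 :=
            mul_le_mul (hlamM ω) (hγle1 ω) (by linarith [hγ_nonpos ω])
              (le_trans (hlam0 ω) (hlamM ω))
        _ = M := mul_one M
    have hconv : ∀ᵐ ω ∂μ, Filter.Tendsto (fun n => sq n ω * (γ ω + ind C ω))
        Filter.atTop (nhds (-(lam ω * γ ω))) := by
      filter_upwards [hγstrict] with ω hst
      by_cases h : ω ∈ C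
      · obtain ⟨ha, hb⟩ := hst h
        have hden : 0 < 1 + γ ω := by linarith
        refine Filter.Tendsto.congr' ?_ tendsto_const_nhds
        filter_upwards [Filter.eventually_ge_atTop ⌈lam ω * -γ ω / (1 + γ ω)⌉₊] with k hk
        have hqn : lam ω * -γ ω / (1 + γ ω) ≤ (k : ℝ) :=
          le_trans (Nat.le_ceil _) (by exact_mod_cast hk)
        have hsq : sq k ω = lam ω * -γ ω / (1 + γ ω) := min_eq_left hqn
        rw [hsq, ind_mem h]
        have h1' : γ ω + 1 = 1 + γ ω := by ring
        rw [h1', div_mul_cancel₀ _ (ne_of_gt hden)]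
        ring
      · rw [hγ_zero ω h, ind_nmem h]
        simpa using (tendsto_const_nhds : Filter.Tendsto (fun _ : ℕ => (0:ℝ))
          Filter.atTop (nhds 0))
    have hAconv : ∀ᵐ ω ∂μ, Filter.Tendsto
        (fun n => lam ω * γ ω + sq n ω * (γ ω + ind C ω)) Filter.atTop (nhds 0) := by
      filter_upwards [hconv] with ω hc
      simpa using (tendsto_const_nhds.add hc :
        Filter.Tendsto (fun n => lam ω * γ ω + sq n ω * (γ ω + ind C ω)) Filter.atTop
          (nhds (lam ω * γ ω + -(lam ω * γ ω))))
    have hBm2 : ∀ n, Measurable[m2] (fun ω => sq n ω * (γ ω + ind C ω)) := fun n =>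
      ((hsm n).mul (hγm.add (measurable_ind hC))).mono hm le_rfl
    have hAm : ∀ n, Measurable[m2] (fun ω => lam ω * γ ω + sq n ω * (γ ω + ind C ω)) :=
      fun n => (((hlamm.mul hγm).add ((hsm n).mul (hγm.add (measurable_ind hC)))).mono hm le_rfl)
    have hlim1 := hvLeb (fun n ω => sq n ω * (γ ω + ind C ω)) (fun ω => -(lam ω * γ ω))
      hBm2 ((hlamm.mul hγm).mono hm le_rfl).neg ⟨max M 0, hBabs⟩
      (bdd_neg ⟨max M 0, hlamγ⟩)
      (MeasureTheory.tendstoInMeasure_of_tendsto_ae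
        (fun n => (hBm2 n).aestronglyMeasurable) hconv)
    have hlim2 := hvLeb (fun n ω => lam ω * γ ω + sq n ω * (γ ω + ind C ω)) (fun _ => (0:ℝ))
      hAm measurable_const
      ⟨max M 0 + max M 0, fun n ω => (abs_add_le _ _).trans (add_le_add (hlamγ ω) (hBabs n ω))⟩
      (bdd_const 0)
      (MeasureTheory.tendstoInMeasure_of_tendsto_ae
        (fun n => (hAm n).aestronglyMeasurable) hAconv)
    have heq2 : (fun n => v (fun ω => lam ω * γ ω + sq n ω * (γ ω + ind C ω))) =
        fun n => v (fun ω => lam ω * γ ω) + v (fun ω => sq n ω * (γ ω + ind C ω)) :=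
      funext hiden
    rw [heq2] at hlim2
    have hlim3 : Filter.Tendsto
        (fun n => v (fun ω => lam ω * γ ω) + v (fun ω => sq n ω * (γ ω + ind C ω)))
        Filter.atTop (nhds (v (fun ω => lam ω * γ ω) + v (fun ω => -(lam ω * γ ω)))) :=
      tendsto_const_nhds.add hlim1
    have hfin := tendsto_nhds_unique hlim2 hlim3
    rw [v_const hv 0] at hfin
    linarith
  -- Stage 2
  intro C' hC'
  have hCC' : MeasurableSet[m1] (C ∩ C') := hC.inter hC'
  have hlm : ∀ n : ℕ, Measurable[m1] (fun ω => min (ind (C ∩ C') ω / -γ ω) (n:ℝ)) :=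
    fun n => ((measurable_ind hCC').div hγm.neg).min measurable_const
  have hl0 : ∀ (n:ℕ) ω, 0 ≤ min (ind (C ∩ C') ω / -γ ω) (n:ℝ) := fun n ω => le_min
    (div_nonneg (ind_nonneg _ ω) (by linarith [hγ_nonpos ω])) (Nat.cast_nonneg n)
  have hkey := fun n : ℕ => key1 (fun ω => min (ind (C ∩ C') ω / -γ ω) (n:ℝ)) (hlm n)
    (hl0 n) n (fun ω => min_le_right _ _)
  have habs : ∀ (n:ℕ) ω, |min (ind (C ∩ C') ω / -γ ω) (n:ℝ) * γ ω| ≤ 1 := by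
    intro n ω
    have hle : min (ind (C ∩ C') ω / -γ ω) (n:ℝ) * γ ω ≤ 0 :=
      mul_nonpos_iff.mpr (Or.inl ⟨hl0 n ω, hγ_nonpos ω⟩)
    rw [abs_of_nonpos hle]
    rcases eq_or_lt_of_le (neg_nonneg.mpr (hγ_nonpos ω)) with h | h
    · have hγ0 : γ ω = 0 := by linarith
      rw [hγ0]; norm_num
    · have hmle : min (ind (C ∩ C') ω / -γ ω) (n:ℝ) ≤ ind (C ∩ C') ω / -γ ω :=
        min_le_left _ _
      have h2 : min (ind (C ∩ C') ω / -γ ω) (n:ℝ) * -γ ω ≤ ind (C ∩ C') ω := by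
        calc min (ind (C ∩ C') ω / -γ ω) (n:ℝ) * -γ ω
            ≤ ind (C ∩ C') ω / -γ ω * -γ ω := mul_le_mul_of_nonneg_right hmle h.le
          _ = ind (C ∩ C') ω := div_mul_cancel₀ _ (ne_of_gt h)
      have h3 := ind_le_one (C ∩ C') ω
      nlinarith
  have hconv2 : ∀ᵐ ω ∂μ, Filter.Tendsto
      (fun n : ℕ => min (ind (C ∩ C') ω / -γ ω) (n:ℝ) * γ ω) Filter.atTop
      (nhds (-(ind (C ∩ C') ω))) := by
    filter_upwards [hγstrict] with ω hst
    by_cases h : ω ∈ C ∩ C'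
    · obtain ⟨ha, hb⟩ := hst h.1
      have hpos : 0 < -γ ω := by linarith
      refine Filter.Tendsto.congr' ?_ tendsto_const_nhds
      filter_upwards [Filter.eventually_ge_atTop ⌈ind (C ∩ C') ω / -γ ω⌉₊] with k hk
      have hqn : ind (C ∩ C') ω / -γ ω ≤ (k:ℝ) :=
        le_trans (Nat.le_ceil _) (by exact_mod_cast hk)
      rw [min_eq_left hqn, ind_mem h]
      have hne : -γ ω ≠ 0 := ne_of_gt hpos
      field_simp
      rw [div_self (ne_of_lt hb)]
    · rw [ind_nmem h]
      have h0 : Filter.Tendsto (fun _ : ℕ => (0:ℝ)) Filter.atTop (nhds (-(0:ℝ))) := by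
        simpa using (tendsto_const_nhds : Filter.Tendsto (fun _ : ℕ => (0:ℝ))
          Filter.atTop (nhds 0))
      refine Filter.Tendsto.congr (fun k => ?_) h0
      rw [zero_div, min_eq_left (Nat.cast_nonneg k), zero_mul]
  have hconv2' : ∀ᵐ ω ∂μ, Filter.Tendsto
      (fun n : ℕ => -(min (ind (C ∩ C') ω / -γ ω) (n:ℝ) * γ ω)) Filter.atTop
      (nhds (ind (C ∩ C') ω)) := by
    filter_upwards [hconv2] with ω hc
    simpa using hc.neg
  have hγmul : ∀ n : ℕ, Measurable[m2] (fun ω => min (ind (C ∩ C') ω / -γ ω) (n:ℝ) * γ ω) :=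
    fun n => ((hlm n).mul hγm).mono hm le_rfl
  have hl1 := hvLeb (fun n ω => min (ind (C ∩ C') ω / -γ ω) (n:ℝ) * γ ω)
    (fun ω => -ind (C ∩ C') ω) hγmul (measurable_ind (hm _ hCC')).neg ⟨1, habs⟩
    (bdd_neg (bdd_ind _))
    (MeasureTheory.tendstoInMeasure_of_tendsto_ae
      (fun n => (hγmul n).aestronglyMeasurable) hconv2)
  have hl2 := hvLeb (fun n ω => -(min (ind (C ∩ C') ω / -γ ω) (n:ℝ) * γ ω))
    (ind (C ∩ C')) (fun n => (hγmul n).neg) (measurable_ind (hm _ hCC'))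
    ⟨1, fun n ω => by rw [abs_neg]; exact habs n ω⟩ (bdd_ind _)
    (MeasureTheory.tendstoInMeasure_of_tendsto_ae
      (fun n => (hγmul n).neg.aestronglyMeasurable) hconv2')
  refine ⟨measurable_ind hCC', bdd_ind _, ?_⟩
  have hsum := hl1.add hl2
  have hzero : (fun n : ℕ => v (fun ω => min (ind (C ∩ C') ω / -γ ω) (n:ℝ) * γ ω) +
      v (fun ω => -(min (ind (C ∩ C') ω / -γ ω) (n:ℝ) * γ ω))) = fun _ => (0:ℝ) :=
    funext fun n => hkey n
  rw [hzero] at hsum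
  have := tendsto_nhds_unique tendsto_const_nhds hsum
  linarith

lemma integrable_ind' [MeasureTheory.IsProbabilityMeasure μ] {B : Set Ω}
    (hB : MeasurableSet[m2] B) : MeasureTheory.Integrable (ind B) μ :=
  MeasureTheory.Integrable.mono' (MeasureTheory.integrable_const 1)
    (measurable_ind hB).aestronglyMeasurable
    (Filter.Eventually.of_forall fun ω => by
      rw [Real.norm_eq_abs]; exact abs_ind_le_one B ω)

lemma pos_inter [MeasureTheory.IsProbabilityMeasure μ] (hm : m1 ≤ m2)
    {B s : Set Ω} (hB : MeasurableSet[m2] B) (hs : MeasurableSet[m1] s)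
    (hμs : 0 < μ s)
    (hpos : ∀ᵐ ω ∂μ, ω ∈ s → 0 < (μ[ind B | m1]) ω) : 0 < μ (B ∩ s) := by
  haveI : MeasureTheory.SigmaFinite (μ.trim hm) := inferInstance
  by_contra hc
  push_neg at hc
  have h0 : μ (B ∩ s) = 0 := le_antisymm hc zero_le
  have hint : MeasureTheory.Integrable (ind B) μ := integrable_ind' hB
  have heq := MeasureTheory.setIntegral_condExp hm hint hs
  have hr : ∫ ω in s, ind B ω ∂μ = (μ (s ∩ B)).toReal := by
    rw [show (∫ ω in s, ind B ω ∂μ) = ∫ ω in s, B.indicator (fun _ => (1:ℝ)) ω ∂μ from rfl,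
      MeasureTheory.setIntegral_indicator hB]
    simp
    rfl
  have hz : ∫ ω in s, (μ[ind B | m1]) ω ∂μ = 0 := by
    rw [heq, hr, Set.inter_comm, h0]
    simp
  have hnn : 0 ≤ᵐ[μ] (μ[ind B | m1]) :=
    MeasureTheory.condExp_nonneg (Filter.Eventually.of_forall (ind_nonneg B))
  have hzero_ae := (MeasureTheory.setIntegral_eq_zero_iff_of_nonneg_ae
    (MeasureTheory.ae_restrict_of_ae hnn)
    MeasureTheory.integrable_condExp.integrableOn).mp hz
  have hposr : ∀ᵐ ω ∂μ.restrict s, 0 < (μ[ind B | m1]) ω := by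
    rw [MeasureTheory.ae_restrict_iff' (hm _ hs)]
    exact hpos
  have hfalse : ∀ᵐ ω ∂μ.restrict s, False := by
    filter_upwards [hzero_ae, hposr] with ω h1 h2
    simp only [Pi.zero_apply] at h1
    rw [h1] at h2
    exact lt_irrefl 0 h2
  have hms : μ.restrict s Set.univ = 0 := by
    have := ae_iff.mp hfalse
    simpa using this
  rw [MeasureTheory.Measure.restrict_apply_univ] at hms
  exact absurd hms (ne_of_gt hμs)

lemma shrink [MeasureTheory.IsProbabilityMeasure μ] (hm : m1 ≤ m2)
    (hca : CondAtomless m1 m2 μ) {D : Set Ω} (hD : MeasurableSet[m1] D) :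
    ∃ Bs : ℕ → Set Ω, (∀ n, MeasurableSet[m2] (Bs n) ∧ Bs n ⊆ D ∧
      (∀ᵐ ω ∂μ, ω ∈ D → 0 < (μ[ind (Bs n) | m1]) ω)) ∧
      Filter.Tendsto (fun n => μ (Bs n)) Filter.atTop (nhds 0) := by
  classical
  haveI : MeasureTheory.SigmaFinite (μ.trim hm) := inferInstance
  have hstep : ∀ B : Set Ω, MeasurableSet[m2] B → B ⊆ D →
      (∀ᵐ ω ∂μ, ω ∈ D → 0 < (μ[ind B | m1]) ω) →
      ∃ B' : Set Ω, (MeasurableSet[m2] B' ∧ B' ⊆ D ∧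
        (∀ᵐ ω ∂μ, ω ∈ D → 0 < (μ[ind B' | m1]) ω)) ∧ μ B' ≤ μ B / 2 := by
    intro B hB hBD hBpos
    obtain ⟨B', hB', hB'B, hae⟩ := hca B hB
    have hae' : ∀ᵐ ω ∂μ, 0 < (μ[ind B | m1]) ω →
        0 < (μ[ind B' | m1]) ω ∧ (μ[ind B' | m1]) ω < (μ[ind B | m1]) ω := hae
    have hindB : MeasureTheory.Integrable (ind B) μ := integrable_ind' hB
    have hindB' : MeasureTheory.Integrable (ind B') μ := integrable_ind' hB'
    have hdiff_eq : ind (B \ B') = ind B - ind B' := by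
      funext ω
      simp only [Pi.sub_apply]
      by_cases h1 : ω ∈ B'
      · rw [ind_mem h1, ind_mem (hB'B h1), ind_nmem (fun hx => hx.2 h1)]; ring
      · by_cases h2 : ω ∈ B
        · rw [ind_mem h2, ind_nmem h1, ind_mem ((Set.mem_diff _).mpr ⟨h2, h1⟩)]; ring
        · rw [ind_nmem h2, ind_nmem h1, ind_nmem (fun hx => h2 hx.1)]; ring
    have hsub : μ[ind (B \ B') | m1] =ᵐ[μ] μ[ind B | m1] - μ[ind B' | m1] := by
      rw [hdiff_eq]
      exact MeasureTheory.condExp_sub hindB hindB' m1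
    have hmeas_diff : MeasurableSet[m2] (B \ B') := hB.diff hB'
    have hposB' : ∀ᵐ ω ∂μ, ω ∈ D → 0 < (μ[ind B' | m1]) ω := by
      filter_upwards [hBpos, hae'] with ω h1 h2 h3
      exact (h2 (h1 h3)).1
    have hposDiff : ∀ᵐ ω ∂μ, ω ∈ D → 0 < (μ[ind (B \ B') | m1]) ω := by
      filter_upwards [hBpos, hae', hsub] with ω h1 h2 h3 h4
      have h5 := h2 (h1 h4)
      rw [h3]
      simp only [Pi.sub_apply]
      have := h1 h4
      linarith [h5.2]
    have hBsplit : μ B' + μ (B \ B') = μ B := by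
      rw [← MeasureTheory.measure_union disjoint_sdiff_self_right hmeas_diff,
        Set.union_diff_cancel hB'B]
    have hhalf : μ B' ≤ μ B / 2 ∨ μ (B \ B') ≤ μ B / 2 := by
      by_contra hcon
      push_neg at hcon
      obtain ⟨h1, h2⟩ := hcon
      have hlt : μ B / 2 + μ B / 2 < μ B' + μ (B \ B') := ENNReal.add_lt_add h1 h2
      rw [ENNReal.add_halves, hBsplit] at hlt
      exact lt_irrefl _ hlt
    rcases hhalf with h | h
    · exact ⟨B', ⟨hB', hB'B.trans hBD, hposB'⟩, h⟩
    · exact ⟨B \ B', ⟨hmeas_diff, Set.diff_subset.trans hBD, hposDiff⟩, h⟩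
  have hbase : MeasurableSet[m2] D ∧ D ⊆ D ∧
      (∀ᵐ ω ∂μ, ω ∈ D → 0 < (μ[ind D | m1]) ω) := by
    refine ⟨hm _ hD, Set.Subset.rfl, ?_⟩
    have hcd : μ[ind D | m1] = ind D :=
      MeasureTheory.condExp_of_stronglyMeasurable hm
        ((measurable_ind hD).stronglyMeasurable) (integrable_ind' (hm _ hD))
    rw [hcd]
    exact Filter.Eventually.of_forall (fun ω hω => by rw [ind_mem hω]; norm_num)
  obtain ⟨g, hg⟩ : ∃ g : {B : Set Ω // MeasurableSet[m2] B ∧ B ⊆ D ∧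
        (∀ᵐ ω ∂μ, ω ∈ D → 0 < (μ[ind B | m1]) ω)} →
      {B : Set Ω // MeasurableSet[m2] B ∧ B ⊆ D ∧
        (∀ᵐ ω ∂μ, ω ∈ D → 0 < (μ[ind B | m1]) ω)},
      ∀ x, μ (g x).1 ≤ μ x.1 / 2 := by
    choose f hf using fun x : {B : Set Ω // MeasurableSet[m2] B ∧ B ⊆ D ∧
        (∀ᵐ ω ∂μ, ω ∈ D → 0 < (μ[ind B | m1]) ω)} =>
      hstep x.1 x.2.1 x.2.2.1 x.2.2.2
    exact ⟨fun x => ⟨f x, (hf x).1⟩, fun x => (hf x).2⟩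
  set x0 : {B : Set Ω // MeasurableSet[m2] B ∧ B ⊆ D ∧
      (∀ᵐ ω ∂μ, ω ∈ D → 0 < (μ[ind B | m1]) ω)} := ⟨D, hbase⟩ with hx0
  refine ⟨fun n => (g^[n] x0).1, fun n => (g^[n] x0).2, ?_⟩
  have hb2 : ∀ n, μ (g^[n] x0).1 ≤ μ D * (2⁻¹ : ENNReal)^n := by
    intro n
    induction n with
    | zero => simp [hx0]
    | succ k ih =>
      have h1 : g^[k+1] x0 = g (g^[k] x0) :=
        Function.iterate_succ_apply' g k _
      rw [h1]
      calc μ (g (g^[k] x0)).1 ≤ μ (g^[k] x0).1 / 2 := hg _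
        _ ≤ μ D * (2⁻¹ : ENNReal)^k / 2 := ENNReal.div_le_div_right ih 2
        _ = μ D * (2⁻¹ : ENNReal)^(k+1) := by
            rw [div_eq_mul_inv, mul_assoc, ← pow_succ]
  refine tendsto_of_tendsto_of_tendsto_of_le_of_le tendsto_const_nhds ?_
    (fun n => zero_le) hb2
  have hgeo : Filter.Tendsto (fun n : ℕ => (2⁻¹ : ENNReal)^n) Filter.atTop (nhds 0) :=
    ENNReal.tendsto_pow_atTop_nhds_zero_of_lt_one (by norm_num)
  have := ENNReal.Tendsto.const_mul hgeo (Or.inr (MeasureTheory.measure_ne_top μ D))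
  simpa using this

lemma neg_ind_inter (B C : Set Ω) :
    (fun ω => -ind (B ∩ C) ω) = (fun ω => ind C ω * -ind B ω) := by
  funext ω
  by_cases h1 : ω ∈ B ∩ C
  · rw [ind_mem h1, ind_mem h1.2, ind_mem h1.1]; ring
  · rw [ind_nmem h1]
    by_cases h2 : ω ∈ C
    · have h3 : ω ∉ B := fun hb => h1 ⟨hb, h2⟩
      rw [ind_mem h2, ind_nmem h3]; ring
    · rw [ind_nmem h2]; ring

lemma u12_nonpos (hu12 : CondCoherentUtility m1 m2 μ u12) {ξ : Ω → ℝ}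
    (hξ : Measurable[m2] ξ) (hξb : Bdd ξ) (h : ∀ ω, ξ ω ≤ 0) :
    ∀ᵐ ω ∂μ, u12 ξ ω ≤ 0 := by
  have hmono := u12_mono hu12 hξ hξb measurable_zero bdd_zero
    (fun ω => by simpa using h ω)
  filter_upwards [hmono, hu12.map_zero] with ω h1 h2
  rw [h2] at h1
  simpa using h1

lemma claim [MeasureTheory.IsProbabilityMeasure μ] (hm : m1 ≤ m2)
    (hca : CondAtomless m1 m2 μ)
    (hv : ScalarCoherentUtility m2 v) (hrel : Relevant μ v) (hvLeb : ScalarLebesgue μ v)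
    (hcomon : ComonotoneAdditive m2 v)
    (hu12 : CondCoherentUtility m1 m2 μ u12) (hu12Leb : LebesgueProp μ u12)
    (hTC : ∀ ξ, Measurable[m2] ξ → Bdd ξ → v ξ = v (u12 ξ))
    {D : Set Ω} (hD : MeasurableSet[m1] D) (hμD : 0 < μ D) :
    ∃ C : Set Ω, MeasurableSet[m1] C ∧ C ⊆ D ∧ 0 < μ C ∧
      ∀ C', MeasurableSet[m1] C' → Lm m1 v (ind (C ∩ C')) := by
  classical
  by_cases hex : ∃ B : Set Ω, MeasurableSet[m2] B ∧ B ⊆ D ∧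
      0 < μ (D ∩ {ω | -1 < u12 (fun ω' => -ind B ω') ω ∧ u12 (fun ω' => -ind B ω') ω < 0})
  · obtain ⟨B, hB, hBD, hpos⟩ := hex
    obtain ⟨hγm, hγb⟩ := hu12.measurable_map (fun ω' => -ind B ω')
      ((measurable_ind hB).neg) (bdd_neg (bdd_ind B))
    have hSm : MeasurableSet[m1]
        {ω | -1 < u12 (fun ω' => -ind B ω') ω ∧ u12 (fun ω' => -ind B ω') ω < 0} := by
      have he : {ω | -1 < u12 (fun ω' => -ind B ω') ω ∧ u12 (fun ω' => -ind B ω') ω < 0} =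
          (u12 (fun ω' => -ind B ω')) ⁻¹' (Set.Ioo (-1) 0) := by
        ext ω; simp [Set.mem_Ioo]
      rw [he]
      exact hγm measurableSet_Ioo
    set C := D ∩ {ω | -1 < u12 (fun ω' => -ind B ω') ω ∧ u12 (fun ω' => -ind B ω') ω < 0}
      with hCdef
    have hCm : MeasurableSet[m1] C := hD.inter hSm
    have hploc := hu12.poshom (fun ω' => -ind B ω') (ind C) ((measurable_ind hB).neg)
      (bdd_neg (bdd_ind B)) (measurable_ind hCm) (bdd_ind C) (ind_nonneg C)
    have hae : u12 (fun ω' => -ind (B ∩ C) ω') =ᵐ[μ]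
        fun ω => ind C ω * u12 (fun ω' => -ind B ω') ω := by
      rw [neg_ind_inter B C]
      exact hploc
    refine ⟨C, hCm, Set.inter_subset_left, hpos, ?_⟩
    refine good_of_strict hm hv hvLeb hcomon hu12 hTC hCm (hB.inter (hm _ hCm))
      Set.inter_subset_right ?_ ?_
    · filter_upwards [hae] with ω h hω
      rw [h, ind_mem hω, one_mul]
      exact ⟨hω.2.1, hω.2.2⟩
    · filter_upwards [hae] with ω h hω
      rw [h, ind_nmem hω, zero_mul]
  · exfalso
    push_neg at hex
    obtain ⟨Bs, hBs, hBsT⟩ := shrink hm hca hD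
    have hbound : ∀ n, ∀ᵐ ω ∂μ, ω ∈ D →
        u12 (fun ω' => -ind (Bs n) ω') ω ≤ -2⁻¹ := by
      intro n
      obtain ⟨hBn, hBnD, hBnpos⟩ := hBs n
      obtain ⟨hγnm, hγnb⟩ := hu12.measurable_map (fun ω' => -ind (Bs n) ω')
        ((measurable_ind hBn).neg) (bdd_neg (bdd_ind (Bs n)))
      set setL := D ∩ {ω | -2⁻¹ < u12 (fun ω' => -ind (Bs n) ω') ω} with hsetL
      have hLm : MeasurableSet[m1] setL := by
        refine hD.inter ?_
        have he : {ω | -2⁻¹ < u12 (fun ω' => -ind (Bs n) ω') ω} =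
            (u12 (fun ω' => -ind (Bs n) ω')) ⁻¹' (Set.Ioi (-2⁻¹)) := rfl
        rw [he]
        exact hγnm measurableSet_Ioi
      have hL0 : μ setL = 0 := by
        by_contra hLne
        have hLpos : 0 < μ setL := zero_lt_iff.mpr hLne
        have hB'm : MeasurableSet[m2] (Bs n ∩ setL) := hBn.inter (hm _ hLm)
        have hμB' : 0 < μ (Bs n ∩ setL) := pos_inter hm hBn hLm hLpos
          (by filter_upwards [hBnpos] with ω h hω; exact h hω.1)
        have hrelB' : v (fun ω => -ind (Bs n ∩ setL) ω) < 0 := hrel _ hB'm hμB'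
        have hloc := hu12.poshom (fun ω' => -ind (Bs n) ω') (ind setL)
          ((measurable_ind hBn).neg) (bdd_neg (bdd_ind (Bs n)))
          (measurable_ind hLm) (bdd_ind setL) (ind_nonneg setL)
        have haeB' : u12 (fun ω' => -ind (Bs n ∩ setL) ω') =ᵐ[μ]
            fun ω => ind setL ω * u12 (fun ω' => -ind (Bs n) ω') ω := by
          rw [neg_ind_inter (Bs n) setL]
          exact hloc
        have hnot := hex (Bs n ∩ setL) hB'm (Set.inter_subset_left.trans hBnD)
        have hnot0 : μ (D ∩ {ω | -1 < u12 (fun ω' => -ind (Bs n ∩ setL) ω') ω ∧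
            u12 (fun ω' => -ind (Bs n ∩ setL) ω') ω < 0}) = 0 :=
          le_antisymm hnot zero_le
        have hγ'le := u12_nonpos hu12 ((measurable_ind hB'm).neg)
          (bdd_neg (bdd_ind _)) (fun ω => by
            have := ind_nonneg (Bs n ∩ setL) ω; simp only [Pi.neg_apply]; linarith)
        have hγ'0 : u12 (fun ω' => -ind (Bs n ∩ setL) ω') =ᵐ[μ] fun _ => (0:ℝ) := by
          have hmem0 := measure_eq_zero_iff_ae_notMem.mp hnot0
          filter_upwards [hmem0, hγ'le, haeB'] with ω h1 h2 h3
          by_cases hω : ω ∈ setL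
          · have h4 : u12 (fun ω' => -ind (Bs n ∩ setL) ω') ω =
                u12 (fun ω' => -ind (Bs n) ω') ω := by
              rw [h3, ind_mem hω, one_mul]
            have h5 : -2⁻¹ < u12 (fun ω' => -ind (Bs n ∩ setL) ω') ω := by
              rw [h4]; exact hω.2
            have h6 : ¬(ω ∈ D ∧ -1 < u12 (fun ω' => -ind (Bs n ∩ setL) ω') ω ∧
                u12 (fun ω' => -ind (Bs n ∩ setL) ω') ω < 0) := h1
            have h7 : ¬(u12 (fun ω' => -ind (Bs n ∩ setL) ω') ω < 0) := by
              intro hlt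
              exact h6 ⟨hω.1, by linarith, hlt⟩
            have h8 : 0 ≤ u12 (fun ω' => -ind (Bs n ∩ setL) ω') ω := le_of_not_gt h7
            exact le_antisymm h2 h8
          · rw [h3, ind_nmem hω, zero_mul]
        have hvB'0 : v (fun ω => -ind (Bs n ∩ setL) ω) = 0 := by
          rw [hTC (fun ω => -ind (Bs n ∩ setL) ω) ((measurable_ind hB'm).neg) (bdd_neg (bdd_ind _))]
          obtain ⟨hum, hub⟩ := hu12.measurable_map (fun ω' => -ind (Bs n ∩ setL) ω')
            ((measurable_ind hB'm).neg) (bdd_neg (bdd_ind _))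
          have := v_ae hvLeb (hum.mono hm le_rfl) hub measurable_const (bdd_const 0) hγ'0
          rw [this, v_const hv 0]
        exact absurd hvB'0 (ne_of_lt hrelB')
      have hnm := measure_eq_zero_iff_ae_notMem.mp hL0
      filter_upwards [hnm] with ω h1 hωD
      by_contra hgt
      push_neg at hgt
      exact h1 ⟨hωD, hgt⟩
    have htim : MeasureTheory.TendstoInMeasure μ (fun n ω => -ind (Bs n) ω)
        Filter.atTop (fun _ => (0:ℝ)) := by
      intro ε hε
      refine tendsto_of_tendsto_of_tendsto_of_le_of_le tendsto_const_nhds hBsT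
        (fun n => zero_le) ?_
      intro n
      refine MeasureTheory.measure_mono ?_
      intro x hx
      simp only [Set.mem_setOf_eq] at hx
      by_contra hxB
      rw [ind_nmem hxB] at hx
      simp only [neg_zero, edist_self] at hx
      exact absurd hx (not_le.mpr hε)
    have hconv := hu12Leb (fun n ω => -ind (Bs n) ω) (fun _ => (0:ℝ))
      (fun n => (measurable_ind (hBs n).1).neg) measurable_const
      ⟨1, fun n ω => by rw [abs_neg]; exact abs_ind_le_one _ ω⟩ (bdd_const 0) htim
    have hz : u12 (fun _ : Ω => (0:ℝ)) =ᵐ[μ] fun _ => (0:ℝ) := hu12.map_zero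
    have h4 := hconv 4⁻¹ (by norm_num)
    have hlb : ∀ n, μ D ≤ μ {x | 4⁻¹ ≤ edist (u12 (fun ω => -ind (Bs n) ω) x)
        (u12 (fun _ => (0:ℝ)) x)} := by
      intro n
      refine MeasureTheory.measure_mono_ae ?_
      filter_upwards [hbound n, hz] with ω h1 h2 hωD
      have h3 := h1 hωD
      show (4⁻¹ : ENNReal) ≤ edist (u12 (fun ω' => -ind (Bs n) ω') ω) (u12 (fun _ => (0:ℝ)) ω)
      rw [h2, edist_dist, Real.dist_eq]
      have habs : |u12 (fun ω' => -ind (Bs n) ω') ω - 0| =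
          -(u12 (fun ω' => -ind (Bs n) ω') ω) := by
        rw [sub_zero, abs_of_nonpos (by linarith)]
      rw [habs]
      have h4r : (4⁻¹ : ENNReal) = ENNReal.ofReal 4⁻¹ := by
        rw [ENNReal.ofReal_inv_of_pos (by norm_num), ENNReal.ofReal_ofNat]
      rw [h4r]
      exact ENNReal.ofReal_le_ofReal (by linarith)
    have hfin := ge_of_tendsto' h4 hlb
    exact absurd (le_antisymm hfin zero_le) (ne_of_gt hμD)

end VU

end Aux13

open Aux13

/-- If `F₂` is atomless conditionally to `F₁` and `u_{0,2}` is a coherent, relevant,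
Lebesgue continuous, comonotone additive and time consistent utility function
(`u_{0,2} = u_{0,1} ∘ u_{1,2}` with `u_{1,2}` a Lebesgue continuous conditional coherent
utility and `u_{0,1}` the restriction of `u_{0,2}` to `L^∞(F₁)`), then there is a
probability measure `Q ∼ P` on `F₁` with `u_{0,1}(f) = E_Q[f]` for all `f ∈ L^∞(F₁)`. -/
theorem stmt_13 {Ω : Type*} {m1 m2 : MeasurableSpace Ω} (hm : m1 ≤ m2)
    (μ : @Measure Ω m2) [IsProbabilityMeasure μ]
    (hca : CondAtomless m1 m2 μ)
    (v : (Ω → ℝ) → ℝ) (hv : ScalarCoherentUtility m2 v)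
    (hrel : Relevant μ v) (hvLeb : ScalarLebesgue μ v)
    (hcomon : ComonotoneAdditive m2 v)
    (u12 : (Ω → ℝ) → Ω → ℝ) (hu12 : CondCoherentUtility m1 m2 μ u12)
    (hu12Leb : LebesgueProp μ u12)
    (hTC : ∀ ξ, Measurable[m2] ξ → Bdd ξ → v ξ = v (u12 ξ)) :
    ∃ Q : @Measure Ω m1, IsProbabilityMeasure Q ∧
      Q ≪ μ.trim hm ∧ μ.trim hm ≪ Q ∧
      ∀ f : Ω → ℝ, Measurable[m1] f → Bdd f → v f = ∫ ω, f ω ∂Q := by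
  classical
  -- `good` sets
  have hLm_empty : Lm m1 v (ind (∅ : Set Ω)) := by
    have he : ind (∅ : Set Ω) = fun _ => (0:ℝ) :=
      funext fun ω => ind_nmem (Set.notMem_empty ω)
    rw [he]
    refine ⟨measurable_const, bdd_const 0, ?_⟩
    rw [v_const hv 0, v_const hv (-(0:ℝ))]
    norm_num
  have hgood_union : ∀ {C₁ C₂ : Set Ω},
      (MeasurableSet[m1] C₁ ∧ ∀ C', MeasurableSet[m1] C' → Lm m1 v (ind (C₁ ∩ C'))) →
      (MeasurableSet[m1] C₂ ∧ ∀ C', MeasurableSet[m1] C' → Lm m1 v (ind (C₂ ∩ C'))) →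
      (MeasurableSet[m1] (C₁ ∪ C₂) ∧ ∀ C', MeasurableSet[m1] C' →
        Lm m1 v (ind ((C₁ ∪ C₂) ∩ C'))) := by
    rintro C₁ C₂ ⟨h1m, h1⟩ ⟨h2m, h2⟩
    refine ⟨h1m.union h2m, fun C' hC' => ?_⟩
    have heq : ind ((C₁ ∪ C₂) ∩ C') =
        fun ω => ind (C₁ ∩ C') ω + ind (C₂ ∩ (C' \ C₁)) ω := by
      funext ω
      by_cases ha : ω ∈ C₁ <;> by_cases hb : ω ∈ C₂ <;> by_cases hc : ω ∈ C' <;>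
        simp [ind_apply, Set.mem_inter_iff, Set.mem_union, Set.mem_diff, ha, hb, hc]
    rw [heq]
    exact Lm_add hm hv (h1 C' hC') (h2 (C' \ C₁) (hC'.diff h1m))
  have hgood_iUnion : ∀ (Cs : ℕ → Set Ω),
      (∀ n, MeasurableSet[m1] (Cs n) ∧ ∀ C', MeasurableSet[m1] C' →
        Lm m1 v (ind (Cs n ∩ C'))) →
      (MeasurableSet[m1] (⋃ n, Cs n) ∧ ∀ C', MeasurableSet[m1] C' →
        Lm m1 v (ind ((⋃ n, Cs n) ∩ C'))) := by
    intro Cs hCs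
    have hUm : MeasurableSet[m1] (⋃ n, Cs n) := MeasurableSet.iUnion fun n => (hCs n).1
    refine ⟨hUm, fun C' hC' => ?_⟩
    have hUgood : ∀ n, MeasurableSet[m1] (⋃ k ∈ Finset.range (n+1), Cs k) ∧
        ∀ C'', MeasurableSet[m1] C'' →
          Lm m1 v (ind ((⋃ k ∈ Finset.range (n+1), Cs k) ∩ C'')) := by
      intro n
      induction n with
      | zero =>
        have he : (⋃ k ∈ Finset.range 1, Cs k) = Cs 0 := by
          ext ω; simp
        rw [he]
        exact hCs 0
      | succ k ih =>
        have he : (⋃ j ∈ Finset.range (k+2), Cs j) =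
            (⋃ j ∈ Finset.range (k+1), Cs j) ∪ Cs (k+1) := by
          ext ω
          simp only [Set.mem_iUnion, Finset.mem_range, Set.mem_union]
          constructor
          · rintro ⟨j, hj, hmem⟩
            rcases Nat.lt_succ_iff_lt_or_eq.mp hj with h | h
            · exact Or.inl ⟨j, h, hmem⟩
            · exact Or.inr (h ▸ hmem)
          · rintro (⟨j, hj, hmem⟩ | hmem)
            · exact ⟨j, by omega, hmem⟩
            · exact ⟨k+1, by omega, hmem⟩
        rw [he]
        exact hgood_union ih (hCs (k+1))
    have hten : ∀ ω, Filter.Tendsto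
        (fun n => ind ((⋃ k ∈ Finset.range (n+1), Cs k) ∩ C') ω) Filter.atTop
        (nhds (ind ((⋃ n, Cs n) ∩ C') ω)) := by
      intro ω
      by_cases h : ω ∈ (⋃ n, Cs n) ∩ C'
      · obtain ⟨k, hk⟩ := Set.mem_iUnion.mp h.1
        rw [ind_mem h]
        refine Filter.Tendsto.congr' ?_ tendsto_const_nhds
        filter_upwards [Filter.eventually_ge_atTop k] with n hn
        have hmem : ω ∈ (⋃ j ∈ Finset.range (n+1), Cs j) ∩ C' :=
          Set.mem_inter (Set.mem_biUnion (Finset.mem_range.mpr (by omega)) hk) h.2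
        rw [ind_mem hmem]
      · have hz : ∀ n, ind ((⋃ k ∈ Finset.range (n+1), Cs k) ∩ C') ω = 0 := by
          intro n
          apply ind_nmem
          intro hx
          apply h
          obtain ⟨j, _, hmem⟩ := Set.mem_iUnion₂.mp hx.1
          exact Set.mem_inter (Set.mem_iUnion.mpr ⟨j, hmem⟩) hx.2
        rw [ind_nmem h]
        exact Filter.Tendsto.congr (fun n => (hz n).symm) tendsto_const_nhds
    exact Lm_of_tendsto (μ := μ) hm hv hvLeb (fun n => (hUgood n).2 C' hC')
      (C := 1) (fun n ω => abs_ind_le_one _ ω)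
      (measurable_ind (hUm.inter hC')) (bdd_ind _) hten
  have hLmA : ∀ A : Set Ω, MeasurableSet[m1] A → Lm m1 v (ind A) := by
    intro A hA
    by_cases hμA : μ A = 0
    · have hnull : ind A =ᵐ[μ] fun _ => (0:ℝ) := by
        filter_upwards [measure_eq_zero_iff_ae_notMem.mp hμA] with ω h
        exact ind_nmem h
      refine ⟨measurable_ind hA, bdd_ind A, ?_⟩
      have h1 : v (ind A) = 0 := by
        rw [v_ae hvLeb (measurable_ind (hm _ hA)) (bdd_ind A) measurable_const
          (bdd_const 0) hnull, v_const hv 0]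
      have h2 : v (fun ω => -ind A ω) = 0 := by
        have hnull2 : (fun ω => -ind A ω) =ᵐ[μ] fun _ => (0:ℝ) := by
          filter_upwards [hnull] with ω h
          rw [h, neg_zero]
        rw [v_ae (ξ := fun ω => -ind A ω) hvLeb ((measurable_ind (hm _ hA)).neg) (bdd_neg (bdd_ind A))
          measurable_const (bdd_const 0) hnull2, v_const hv 0]
      rw [h1, h2]; ring
    · have hSne : (0:ℝ) ∈ {x | ∃ Cx : Set Ω, (MeasurableSet[m1] Cx ∧
          ∀ C', MeasurableSet[m1] C' → Lm m1 v (ind (Cx ∩ C'))) ∧ Cx ⊆ A ∧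
          x = (μ Cx).toReal} := by
        refine ⟨∅, ⟨(@MeasurableSet.empty Ω m1), fun C' hC' => ?_⟩, Set.empty_subset A, by simp⟩
        rw [Set.empty_inter]
        exact hLm_empty
      set S : Set ℝ := {x | ∃ Cx : Set Ω, (MeasurableSet[m1] Cx ∧
          ∀ C', MeasurableSet[m1] C' → Lm m1 v (ind (Cx ∩ C'))) ∧ Cx ⊆ A ∧
          x = (μ Cx).toReal} with hSdef
      have hbddS : BddAbove S := by
        refine ⟨1, ?_⟩
        rintro x ⟨Cx, hgx, hsub, hx⟩
        rw [hx]
        calc (μ Cx).toReal ≤ (μ Set.univ).toReal :=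
              ENNReal.toReal_mono (MeasureTheory.measure_ne_top μ _)
                (MeasureTheory.measure_mono (Set.subset_univ _))
          _ = 1 := by rw [MeasureTheory.measure_univ]; norm_num
      have hchoose : ∀ n : ℕ, ∃ Cx : Set Ω, (MeasurableSet[m1] Cx ∧
          ∀ C', MeasurableSet[m1] C' → Lm m1 v (ind (Cx ∩ C'))) ∧ Cx ⊆ A ∧
          sSup S - 1/(n+1) < (μ Cx).toReal := by
        intro n
        have hlt : sSup S - 1/(n+1) < sSup S := by
          have : (0:ℝ) < 1/(n+1) := by positivity
          linarith
        obtain ⟨x, hxS, hx⟩ := exists_lt_of_lt_csSup ⟨0, hSne⟩ hlt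
        obtain ⟨Cx, h1, h2, h3⟩ := hxS
        exact ⟨Cx, h1, h2, h3 ▸ hx⟩
      choose Cseq hCg hCsub hClt using hchoose
      have hCstarg := hgood_iUnion Cseq hCg
      have hCstar_sub : (⋃ n, Cseq n) ⊆ A := Set.iUnion_subset hCsub
      have hle : (μ (⋃ n, Cseq n)).toReal ≤ sSup S :=
        le_csSup hbddS ⟨_, hCstarg, hCstar_sub, rfl⟩
      have hnull : μ (A \ ⋃ n, Cseq n) = 0 := by
        by_contra hne
        have hpos : 0 < μ (A \ ⋃ n, Cseq n) := zero_lt_iff.mpr hne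
        obtain ⟨C2, hC2m, hC2sub, hC2pos, hC2good⟩ :=
          claim (μ := μ) hm hca hv hrel hvLeb hcomon hu12 hu12Leb hTC
            (hA.diff hCstarg.1) hpos
        have hUg := hgood_union hCstarg ⟨hC2m, hC2good⟩
        have hUsub : (⋃ n, Cseq n) ∪ C2 ⊆ A :=
          Set.union_subset hCstar_sub (hC2sub.trans Set.diff_subset)
        have hUle : (μ ((⋃ n, Cseq n) ∪ C2)).toReal ≤ sSup S :=
          le_csSup hbddS ⟨_, hUg, hUsub, rfl⟩
        have hdisj : Disjoint (⋃ n, Cseq n) C2 :=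
          Set.disjoint_left.mpr fun x hx hx2 => (hC2sub hx2).2 hx
        have hadd : μ ((⋃ n, Cseq n) ∪ C2) = μ (⋃ n, Cseq n) + μ C2 :=
          MeasureTheory.measure_union hdisj (hm _ hC2m)
        have htr : (μ ((⋃ n, Cseq n) ∪ C2)).toReal =
            (μ (⋃ n, Cseq n)).toReal + (μ C2).toReal := by
          rw [hadd, ENNReal.toReal_add (MeasureTheory.measure_ne_top μ _)
            (MeasureTheory.measure_ne_top μ _)]
        have hgeα : sSup S ≤ (μ (⋃ n, Cseq n)).toReal := by
          by_contra hlt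
          push_neg at hlt
          obtain ⟨n, hn⟩ := exists_nat_one_div_lt
            (show 0 < sSup S - (μ (⋃ n, Cseq n)).toReal by linarith)
          have h1 := hClt n
          have h2 : (μ (Cseq n)).toReal ≤ (μ (⋃ n, Cseq n)).toReal :=
            ENNReal.toReal_mono (MeasureTheory.measure_ne_top μ _)
              (MeasureTheory.measure_mono (Set.subset_iUnion Cseq n))
          linarith
        have hC2tr : 0 < (μ C2).toReal :=
          ENNReal.toReal_pos (ne_of_gt hC2pos) (MeasureTheory.measure_ne_top μ _)
        linarith
      have haeA : ind A =ᵐ[μ] ind (⋃ n, Cseq n) := by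
        filter_upwards [measure_eq_zero_iff_ae_notMem.mp hnull] with ω h
        by_cases hω : ω ∈ (⋃ n, Cseq n)
        · rw [ind_mem (hCstar_sub hω), ind_mem hω]
        · have hA' : ω ∉ A := fun hA'' => h ⟨hA'', hω⟩
          rw [ind_nmem hA', ind_nmem hω]
      have hLC := hCstarg.2 Set.univ (@MeasurableSet.univ Ω m1)
      rw [Set.inter_univ] at hLC
      refine ⟨measurable_ind hA, bdd_ind A, ?_⟩
      have h1 : v (ind A) = v (ind (⋃ n, Cseq n)) :=
        v_ae hvLeb (measurable_ind (hm _ hA)) (bdd_ind A)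
          (measurable_ind (hm _ hCstarg.1)) (bdd_ind _) haeA
      have h2 : v (fun ω => -ind A ω) = v (fun ω => -ind (⋃ n, Cseq n) ω) :=
        v_ae hvLeb ((measurable_ind (hm _ hA)).neg) (bdd_neg (bdd_ind A))
          ((measurable_ind (hm _ hCstarg.1)).neg) (bdd_neg (bdd_ind _))
          (by filter_upwards [haeA] with ω h; rw [h])
      rw [h1, h2]
      exact hLC.2.2
  -- additivity of v on disjoint m1-indicators
  have hLm_add_ind : ∀ {s t : Set Ω}, MeasurableSet[m1] s → MeasurableSet[m1] t →
      Disjoint s t → v (ind (s ∪ t)) = v (ind s) + v (ind t) := by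
    intro s t hs ht hdisj
    have heq : ind (s ∪ t) = fun ω => ind s ω + ind t ω := by
      funext ω
      by_cases h1 : ω ∈ s
      · rw [ind_mem (Set.mem_union_left t h1), ind_mem h1,
          ind_nmem (fun h2 => Set.disjoint_left.mp hdisj h1 h2)]
        ring
      · by_cases h2 : ω ∈ t
        · rw [ind_mem (Set.mem_union_right s h2), ind_nmem h1, ind_mem h2]; ring
        · rw [ind_nmem (fun h => ((Set.mem_union ω s t).mp h).elim h1 h2),
            ind_nmem h1, ind_nmem h2]
          ring
    rw [heq]
    exact v_add_left hm hv (hLmA s hs) (measurable_ind (hm _ ht)) (bdd_ind t)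
  have hind_empty : ind (∅ : Set Ω) = fun _ => (0:ℝ) :=
    funext fun ω => ind_nmem (Set.notMem_empty ω)
  -- countable additivity
  have hQU : ∀ ⦃g : ℕ → Set Ω⦄, (∀ i, MeasurableSet[m1] (g i)) →
      Pairwise (Function.onFun Disjoint g) →
      ENNReal.ofReal (v (ind (⋃ i, g i))) = ∑' i, ENNReal.ofReal (v (ind (g i))) := by
    intro g hgm hgd
    have hWm : ∀ n, MeasurableSet[m1] (⋃ k ∈ Finset.range n, g k) := fun n =>
      MeasurableSet.biUnion (Finset.range n).countable_toSet (fun b _ => hgm b)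
    have hWadd : ∀ n, v (ind (⋃ k ∈ Finset.range n, g k)) =
        ∑ k ∈ Finset.range n, v (ind (g k)) := by
      intro n
      induction n with
      | zero =>
        have he : (⋃ k ∈ Finset.range 0, g k) = (∅ : Set Ω) := by simp
        rw [he, hind_empty, v_const hv 0]
        simp
      | succ k ih =>
        have he : (⋃ j ∈ Finset.range (k+1), g j) =
            (⋃ j ∈ Finset.range k, g j) ∪ g k := by
          ext ω
          simp only [Set.mem_iUnion, Finset.mem_range, Set.mem_union]
          constructor
          · rintro ⟨j, hj, hmem⟩
            rcases Nat.lt_succ_iff_lt_or_eq.mp hj with h | h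
            · exact Or.inl ⟨j, h, hmem⟩
            · exact Or.inr (h ▸ hmem)
          · rintro (⟨j, hj, hmem⟩ | hmem)
            · exact ⟨j, by omega, hmem⟩
            · exact ⟨k, by omega, hmem⟩
        have hdisjW : Disjoint (⋃ j ∈ Finset.range k, g j) (g k) := by
          rw [Set.disjoint_left]
          intro x hx hxk
          obtain ⟨j, hj, hmem⟩ := Set.mem_iUnion₂.mp hx
          have hjk : j ≠ k := by simp at hj; omega
          exact Set.disjoint_left.mp (hgd hjk) hmem hxk
        rw [he, hLm_add_ind (hWm k) (hgm k) hdisjW, ih, Finset.sum_range_succ]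
    have hten : ∀ ω, Filter.Tendsto (fun n => ind (⋃ k ∈ Finset.range n, g k) ω)
        Filter.atTop (nhds (ind (⋃ i, g i) ω)) := by
      intro ω
      by_cases h : ω ∈ ⋃ i, g i
      · obtain ⟨k, hk⟩ := Set.mem_iUnion.mp h
        rw [ind_mem h]
        refine Filter.Tendsto.congr' ?_ tendsto_const_nhds
        filter_upwards [Filter.eventually_ge_atTop (k+1)] with n hn
        have hmem : ω ∈ ⋃ j ∈ Finset.range n, g j :=
          Set.mem_biUnion (Finset.mem_range.mpr (by omega)) hk
        rw [ind_mem hmem]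
      · have hz : ∀ n, ind (⋃ k ∈ Finset.range n, g k) ω = 0 := by
          intro n
          apply ind_nmem
          intro hx
          obtain ⟨j, _, hmem⟩ := Set.mem_iUnion₂.mp hx
          exact h (Set.mem_iUnion.mpr ⟨j, hmem⟩)
        rw [ind_nmem h]
        exact Filter.Tendsto.congr (fun n => (hz n).symm) tendsto_const_nhds
    have hvlim := hvLeb (fun n => ind (⋃ k ∈ Finset.range n, g k)) (ind (⋃ i, g i))
      (fun n => measurable_ind (hm _ (hWm n)))
      (measurable_ind (hm _ (MeasurableSet.iUnion hgm)))
      ⟨1, fun n ω => abs_ind_le_one _ ω⟩ (bdd_ind _)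
      (MeasureTheory.tendstoInMeasure_of_tendsto_ae
        (fun n => (measurable_ind (hm _ (hWm n))).aestronglyMeasurable)
        (Filter.Eventually.of_forall hten))
    have hsum_nonneg : ∀ i, 0 ≤ v (ind (g i)) := fun i =>
      hv.nonneg _ (measurable_ind (hm _ (hgm i))) (bdd_ind _) (ind_nonneg _)
    have hmono_ind : ∀ n ω, ind (⋃ k ∈ Finset.range n, g k) ω ≤ ind (⋃ i, g i) ω := by
      intro n ω
      by_cases h : ω ∈ ⋃ k ∈ Finset.range n, g k
      · obtain ⟨j, _, hmem⟩ := Set.mem_iUnion₂.mp h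
        rw [ind_mem h, ind_mem (Set.mem_iUnion.mpr ⟨j, hmem⟩)]
      · rw [ind_nmem h]
        exact ind_nonneg _ ω
    have hsummable : Summable (fun i => v (ind (g i))) := by
      refine summable_of_sum_range_le (c := v (ind (⋃ i, g i))) hsum_nonneg (fun n => ?_)
      rw [← hWadd n]
      exact v_mono hv (measurable_ind (hm _ (hWm n))) (bdd_ind _)
        (measurable_ind (hm _ (MeasurableSet.iUnion hgm))) (bdd_ind _) (hmono_ind n)
    have htsum : ∑' i, v (ind (g i)) = v (ind (⋃ i, g i)) := by
      have h1 := hsummable.hasSum.tendsto_sum_nat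
      have h2 : Filter.Tendsto (fun n => ∑ k ∈ Finset.range n, v (ind (g k)))
          Filter.atTop (nhds (v (ind (⋃ i, g i)))) := by
        refine Filter.Tendsto.congr (fun n => hWadd n) hvlim
      exact tendsto_nhds_unique h1 h2
    rw [← htsum, ENNReal.ofReal_tsum_of_nonneg hsum_nonneg hsummable]
  have hQ0 : ENNReal.ofReal (v (ind (∅ : Set Ω))) = 0 := by
    rw [hind_empty, v_const hv 0]
    simp
  -- the candidate measure
  set Q : @Measure Ω m1 := @MeasureTheory.Measure.ofMeasurable Ω m1
    (fun s _ => ENNReal.ofReal (v (ind s))) hQ0 (fun g hgm hgd => hQU hgm hgd) with hQdef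
  have hQapp : ∀ s, MeasurableSet[m1] s → Q s = ENNReal.ofReal (v (ind s)) := by
    intro s hs
    rw [hQdef]
    exact @MeasureTheory.Measure.ofMeasurable_apply Ω m1 _ _ _ s hs
  have hQuniv : Q Set.univ = 1 := by
    rw [hQapp _ (@MeasurableSet.univ Ω m1)]
    have he : ind (Set.univ : Set Ω) = fun _ => (1:ℝ) :=
      funext fun ω => ind_mem (Set.mem_univ ω)
    rw [he, v_const hv 1, ENNReal.ofReal_one]
  haveI hQprob : IsProbabilityMeasure Q := ⟨hQuniv⟩
  refine ⟨Q, hQprob, ?_, ?_, ?_⟩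
  · refine MeasureTheory.Measure.AbsolutelyContinuous.mk (fun s hs h0 => ?_)
    have hμs : μ s = 0 := by
      rw [MeasureTheory.trim_measurableSet_eq hm hs] at h0
      exact h0
    have hnull : ind s =ᵐ[μ] fun _ => (0:ℝ) := by
      filter_upwards [measure_eq_zero_iff_ae_notMem.mp hμs] with ω h
      exact ind_nmem h
    rw [hQapp s hs, v_ae hvLeb (measurable_ind (hm _ hs)) (bdd_ind s) measurable_const
      (bdd_const 0) hnull, v_const hv 0]
    simp
  · refine MeasureTheory.Measure.AbsolutelyContinuous.mk (fun s hs h0 => ?_)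
    rw [hQapp s hs] at h0
    have hv0 : v (ind s) = 0 := le_antisymm (ENNReal.ofReal_eq_zero.mp h0)
      (hv.nonneg _ (measurable_ind (hm _ hs)) (bdd_ind s) (ind_nonneg s))
    have hμs : μ s = 0 := by
      by_contra hne
      have hpos : 0 < μ s := zero_lt_iff.mpr hne
      have hlt : v (fun ω => -ind s ω) < 0 := hrel s (hm _ hs) hpos
      have hL := (hLmA s hs).2.2
      linarith
    rw [MeasureTheory.trim_measurableSet_eq hm hs, hμs]
  · intro f hf hfb
    letI : MeasurableSpace Ω := m1
    obtain ⟨Cf, hCf⟩ := hfb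
    have hint : ∀ h : Ω → ℝ, Measurable[m1] h → Bdd h → MeasureTheory.Integrable h Q := by
      intro h hh hb
      obtain ⟨K, hK⟩ := hb
      exact MeasureTheory.Integrable.mono' (MeasureTheory.integrable_const K)
        hh.aestronglyMeasurable
        (Filter.Eventually.of_forall fun ω => by rw [Real.norm_eq_abs]; exact hK ω)
    have hsimple : ∀ g0 : @MeasureTheory.SimpleFunc Ω m1 ℝ,
        Lm m1 v ⇑g0 ∧ v ⇑g0 = ∫ ω, g0 ω ∂Q := by
      intro g0
      refine @MeasureTheory.SimpleFunc.induction Ω ℝ m1 _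
        (fun g0 => Lm m1 v ⇑g0 ∧ v ⇑g0 = ∫ ω, g0 ω ∂Q) ?_ ?_ g0
      · intro c s hs
        have hcoe : ⇑(MeasureTheory.SimpleFunc.piecewise s hs
            (MeasureTheory.SimpleFunc.const Ω c) (MeasureTheory.SimpleFunc.const Ω 0)) =
            fun ω => c * ind s ω := by
          funext ω
          rw [MeasureTheory.SimpleFunc.coe_piecewise]
          by_cases h : ω ∈ s
          · rw [Set.piecewise_eq_of_mem _ _ _ h, ind_mem h]
            simp [MeasureTheory.SimpleFunc.coe_const]
          · rw [Set.piecewise_eq_of_notMem _ _ _ h, ind_nmem h]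
            simp [MeasureTheory.SimpleFunc.coe_const]
        rw [hcoe]
        refine ⟨Lm_smul hm hv c (hLmA s hs), ?_⟩
        have hQs : (Q s).toReal = v (ind s) := by
          rw [hQapp s hs, ENNReal.toReal_ofReal
            (hv.nonneg _ (measurable_ind (hm _ hs)) (bdd_ind s) (ind_nonneg s))]
        have hVc : v (fun ω => c * ind s ω) = c * v (ind s) := by
          rcases le_or_gt 0 c with hc | hc
          · exact hv.poshom _ (measurable_ind (hm _ hs)) (bdd_ind s) c hc
          · have hLs := (hLmA s hs).2.2
            have h3 : v (fun ω => -ind s ω) = - v (ind s) := by linarith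
            have he : (fun ω => c * ind s ω) = fun ω => (-c) * -ind s ω :=
              funext fun ω => by ring
            rw [he, hv.poshom (fun ω => -ind s ω) ((measurable_ind (hm _ hs)).neg) (bdd_neg (bdd_ind s))
              (-c) (by linarith), h3]
            ring
        have he2 : (fun ω => c * ind s ω) = s.indicator (fun _ => c) := by
          funext ω
          by_cases h : ω ∈ s
          · rw [ind_mem h, Set.indicator_of_mem h]; ring
          · rw [ind_nmem h, Set.indicator_of_notMem h]; ring
        have hIc : ∫ ω, c * ind s ω ∂Q = (Q s).toReal * c := by
          rw [show (fun ω => c * ind s ω) = s.indicator (fun _ => c) from he2,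
            MeasureTheory.integral_indicator_const c hs, smul_eq_mul]
          rfl
        rw [hVc, hIc, hQs]
        ring
      · intro g1 g2 hdisj h1 h2
        have hcoe : ⇑(g1 + g2) = fun ω => g1 ω + g2 ω := by
          rw [MeasureTheory.SimpleFunc.coe_add]; rfl
        refine ⟨by rw [hcoe]; exact Lm_add hm hv h1.1 h2.1, ?_⟩
        rw [hcoe, v_add_left hm hv h1.1 (h2.1.1.mono hm le_rfl) h2.1.2.1, h1.2, h2.2,
          ← MeasureTheory.integral_add (hint _ g1.measurable h1.1.2.1)
            (hint _ g2.measurable h2.1.2.1)]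
    have hfm2 : Measurable[m2] f := hf.mono hm le_rfl
    have hg_tendsto : ∀ ω, Filter.Tendsto
        (fun n => MeasureTheory.SimpleFunc.approxOn f hf Set.univ 0 (Set.mem_univ 0) n ω)
        Filter.atTop (nhds (f ω)) := fun ω =>
      MeasureTheory.SimpleFunc.tendsto_approxOn hf (Set.mem_univ 0) (by simp)
    have hg_bound : ∀ (n : ℕ) ω,
        |MeasureTheory.SimpleFunc.approxOn f hf Set.univ 0 (Set.mem_univ 0) n ω| ≤ Cf + Cf := by
      intro n ω
      have h1 := MeasureTheory.SimpleFunc.norm_approxOn_zero_le hf (Set.mem_univ 0) ω n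
      rw [Real.norm_eq_abs, Real.norm_eq_abs] at h1
      have h2 := hCf ω
      linarith
    have hvlim := hvLeb
      (fun n => ⇑(MeasureTheory.SimpleFunc.approxOn f hf Set.univ 0 (Set.mem_univ 0) n)) f
      (fun n => (MeasureTheory.SimpleFunc.approxOn f hf Set.univ 0
        (Set.mem_univ 0) n).measurable.mono hm le_rfl) hfm2
      ⟨Cf + Cf, hg_bound⟩ ⟨Cf, hCf⟩
      (MeasureTheory.tendstoInMeasure_of_tendsto_ae
        (fun n => ((MeasureTheory.SimpleFunc.approxOn f hf Set.univ 0
          (Set.mem_univ 0) n).measurable.mono hm le_rfl).aestronglyMeasurable)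
        (Filter.Eventually.of_forall hg_tendsto))
    have hintlim : Filter.Tendsto
        (fun n => ∫ ω, MeasureTheory.SimpleFunc.approxOn f hf Set.univ 0
          (Set.mem_univ 0) n ω ∂Q) Filter.atTop (nhds (∫ ω, f ω ∂Q)) := by
      refine MeasureTheory.tendsto_integral_of_dominated_convergence (fun _ => Cf + Cf)
        (fun n => (MeasureTheory.SimpleFunc.approxOn f hf Set.univ 0
          (Set.mem_univ 0) n).measurable.aestronglyMeasurable)
        (MeasureTheory.integrable_const _)
        (fun n => Filter.Eventually.of_forall fun ω => by
          rw [Real.norm_eq_abs]; exact hg_bound n ω)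
        (Filter.Eventually.of_forall hg_tendsto)
    have hveq : (fun n => v ⇑(MeasureTheory.SimpleFunc.approxOn f hf Set.univ 0
        (Set.mem_univ 0) n)) = fun n => ∫ ω, MeasureTheory.SimpleFunc.approxOn f hf
        Set.univ 0 (Set.mem_univ 0) n ω ∂Q :=
      funext fun n => (hsimple _).2
    rw [hveq] at hvlim
    exact tendsto_nhds_unique hvlim hintlim
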